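/- arXiv:1707.08281 — 5 statements merged into one kernel-verified Lean document; each statement's English description precedes it below -/
import Mathlib

section
/- Let k ≥ 1 be an integer and let ξ ∈ 𝔤 satisfy [Ω_+, ξ] = 0 and [W_0, ξ] = 2k ξ. Set ξ_l = (1/l!) ad(Ω_−)^l(ξ) for l ≥ 0, and suppose c(ξ_l) = (−1)^l ξ_{2k − l} for 0 ≤ l ≤ 2k. Define X = ξ_{k−1} if k is odd and X = i ξ_{k−1} if k is even, and Y = iX. Then T(X) = k(k+1) X and T(Y) = 0, where T : 𝔤 → 𝔤 is the ℝ-linear operator T(Z) = ½[Ω_+, [Ω_−, Z]] + ½[Ω_+, [Ω_+, c(Z)]]. -/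
noncomputable section

/-- Iterated adjoint action: `ad(Y)^l X`. -/
def adPow {𝔤 : Type*} [LieRing 𝔤] [LieAlgebra ℂ 𝔤] (Y : 𝔤) (l : ℕ) (X : 𝔤) : 𝔤 :=
  ((LieAlgebra.ad ℂ 𝔤 Y) ^ l) X

/-- The descendants `ξ_l = (1/l!) ad(Ω₋)^l ξ` of a highest weight vector `ξ`. -/
def xiVec {𝔤 : Type*} [LieRing 𝔤] [LieAlgebra ℂ 𝔤] (Ωm : 𝔤) (ξ : 𝔤) (l : ℕ) : 𝔤 :=
  ((l.factorial : ℂ))⁻¹ • adPow Ωm l ξ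

/-- The eigenspace `V_n` of `ad(W₀)` with eigenvalue `n`. -/
def Vspace {𝔤 : Type*} [LieRing 𝔤] [LieAlgebra ℂ 𝔤] (W₀ : 𝔤) (n : ℤ) : Submodule ℂ 𝔤 :=
  Module.End.eigenspace (LieAlgebra.ad ℂ 𝔤 W₀) (n : ℂ)

/-- the vectors X (from a highest weight vector of weight 2k) and Y = iX are
eigenvectors of the operator T(Z) = ½[Ω₊,[Ω₋,Z]] + ½[Ω₊,[Ω₊,c(Z)]], with eigenvalues
k(k+1) and 0 respectively. -/
theorem T_eigenvectors
    (𝔤 : Type*) [LieRing 𝔤] [LieAlgebra ℂ 𝔤] [FiniteDimensional ℂ 𝔤]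
    [LieAlgebra.IsSemisimple ℂ 𝔤]
    (c : 𝔤 → 𝔤)
    (hc_add : ∀ X Y : 𝔤, c (X + Y) = c X + c Y)
    (hc_smul : ∀ (z : ℂ) (X : 𝔤), c (z • X) = (starRingEnd ℂ z) • c X)
    (hc_lie : ∀ X Y : 𝔤, c ⁅X, Y⁆ = ⁅c X, c Y⁆)
    (hc_invol : ∀ X : 𝔤, c (c X) = X)
    (B : 𝔤 →ₗ[ℂ] 𝔤 →ₗ[ℂ] ℂ)
    (hB_symm : ∀ X Y : 𝔤, B X Y = B Y X)
    (hB_inv : ∀ X Y Z : 𝔤, B ⁅X, Y⁆ Z = B X ⁅Y, Z⁆)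
    (hB_pos : ∀ X : 𝔤, X ≠ 0 → 0 < (-(B (c X) X)).re ∧ (B (c X) X).im = 0)
    (W₀ Ωp Ωm : 𝔤)
    (hW0p : ⁅W₀, Ωp⁆ = (2 : ℂ) • Ωp)
    (hW0m : ⁅W₀, Ωm⁆ = (-2 : ℂ) • Ωm)
    (hpm : ⁅Ωp, Ωm⁆ = W₀)
    (hcΩ : c Ωp = -Ωm)
    (k : ℕ) (hk : 1 ≤ k) (ξ : 𝔤)
    (hhw1 : ⁅Ωp, ξ⁆ = 0) (hhw2 : ⁅W₀, ξ⁆ = ((2 * k : ℕ) : ℂ) • ξ)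
    (hconj : ∀ l ≤ 2 * k, c (xiVec Ωm ξ l) = ((-1 : ℂ)) ^ l • xiVec Ωm ξ (2 * k - l))
    (X Y : 𝔤)
    (hX : X = if Odd k then xiVec Ωm ξ (k - 1) else Complex.I • xiVec Ωm ξ (k - 1))
    (hY : Y = Complex.I • X)
    (T : 𝔤 → 𝔤)
    (hT : T = fun Z => ((2 : ℂ))⁻¹ • ⁅Ωp, ⁅Ωm, Z⁆⁆ + ((2 : ℂ))⁻¹ • ⁅Ωp, ⁅Ωp, c Z⁆⁆) :
    T X = ((k * (k + 1) : ℕ) : ℂ) • X ∧ T Y = 0 := by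
  obtain ⟨m, rfl⟩ : ∃ m, k = m + 1 := ⟨k - 1, by omega⟩
  set K : ℂ := ((2 * (m + 1) : ℕ) : ℂ) with hK
  have hsucc : ∀ l : ℕ, adPow Ωm (l + 1) ξ = ⁅Ωm, adPow Ωm l ξ⁆ := by
    intro l
    show ((LieAlgebra.ad ℂ 𝔤 Ωm) ^ (l + 1)) ξ = _
    rw [pow_succ']
    rfl
  have hA : ∀ l : ℕ, ⁅W₀, adPow Ωm l ξ⁆ = (K - 2 * l) • adPow Ωm l ξ := by
    intro l
    induction l with
    | zero =>
      have h0 : adPow Ωm 0 ξ = ξ := rfl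
      simpa [h0] using hhw2
    | succ l ih =>
      rw [hsucc, leibniz_lie, hW0m, smul_lie, ih, lie_smul, ← hsucc]
      push_cast
      match_scalars
      ring
  have hC : ∀ l : ℕ, ⁅Ωp, adPow Ωm (l + 1) ξ⁆ = (((l : ℂ) + 1) * (K - l)) • adPow Ωm l ξ := by
    intro l
    induction l with
    | zero =>
      have h0 : adPow Ωm 0 ξ = ξ := rfl
      rw [hsucc, leibniz_lie, hpm, h0, hhw1, lie_zero, add_zero, hhw2]
      match_scalars
      ring
    | succ l ih =>
      rw [hsucc, leibniz_lie, hpm, hA, ih, lie_smul, ← hsucc]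
      push_cast
      match_scalars
      ring
  have hfac : ∀ l : ℕ, ((l.factorial : ℂ)) ≠ 0 := fun l =>
    Nat.cast_ne_zero.2 (Nat.factorial_ne_zero l)
  have h1 : ((m : ℂ) + 1) ≠ 0 := by
    have : ((m + 1 : ℕ) : ℂ) ≠ 0 := Nat.cast_ne_zero.2 (by omega)
    push_cast at this; exact this
  have h2 : ((m : ℂ) + 2) ≠ 0 := by
    have : ((m + 2 : ℕ) : ℂ) ≠ 0 := Nat.cast_ne_zero.2 (by omega)
    push_cast at this; exact this
  have hf1 : (((m + 1).factorial : ℂ)) = ((m : ℂ) + 1) * (m.factorial : ℂ) := by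
    rw [Nat.factorial_succ]; push_cast; ring
  have hf2 : (((m + 2).factorial : ℂ)) = ((m : ℂ) + 2) * ((m : ℂ) + 1) * (m.factorial : ℂ) := by
    rw [Nat.factorial_succ, Nat.factorial_succ]; push_cast; ring
  set A : 𝔤 := xiVec Ωm ξ m with hA0
  set A1 : 𝔤 := xiVec Ωm ξ (m + 1) with hA1
  set A2 : 𝔤 := xiVec Ωm ξ (m + 2) with hA2
  have hE1 : ⁅Ωm, A⁆ = ((m : ℂ) + 1) • A1 := by
    rw [hA0, hA1]
    unfold xiVec
    rw [lie_smul, ← hsucc, smul_smul]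
    congr 1
    rw [hf1]
    field_simp [hfac m, h1]
  have hE2 : ⁅Ωp, A1⁆ = ((m : ℂ) + 2) • A := by
    rw [hA0, hA1]
    unfold xiVec
    rw [lie_smul, hC m, smul_smul, smul_smul]
    congr 1
    rw [hK, hf1]
    push_cast
    field_simp [hfac m, h1]
    ring
  have hE3 : ⁅Ωp, A2⁆ = ((m : ℂ) + 1) • A1 := by
    rw [hA1, hA2]
    unfold xiVec
    rw [lie_smul, hC (m + 1), smul_smul, smul_smul]
    congr 1
    rw [hK, hf1, hf2]
    push_cast
    field_simp [hfac m, h1, h2]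
    ring
  set lam : ℂ := ((m : ℂ) + 1) * ((m : ℂ) + 2) with hlam
  have hTA1 : ⁅Ωp, ⁅Ωm, A⁆⁆ = lam • A := by
    rw [hE1, lie_smul, hE2, smul_smul, hlam]
  have hTA2 : ⁅Ωp, ⁅Ωp, A2⁆⁆ = lam • A := by
    rw [hE3, lie_smul, hE2, smul_smul, hlam, mul_comm]
  have hcm : c A = ((-1 : ℂ)) ^ m • A2 := by
    have h := hconj m (by omega)
    rwa [show 2 * (m + 1) - m = m + 2 by omega] at h
  have key : ∀ z : ℂ,
      T (z • A) = (2⁻¹ * (z + (starRingEnd ℂ z) * (-1 : ℂ) ^ m) * lam) • A := by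
    intro z
    rw [hT]
    simp only [lie_smul, hTA1, hc_smul, hcm, smul_comm (starRingEnd ℂ z) ((-1 : ℂ) ^ m)]
    simp only [lie_smul, hTA2]
    match_scalars
    ring
  have hkk : ((((m + 1) * (m + 1 + 1) : ℕ)) : ℂ) = lam := by
    rw [hlam]; push_cast; ring
  rcases Nat.even_or_odd m with hm | hm
  · -- m even, k = m+1 odd
    have hodd : Odd (m + 1) := Even.add_one hm
    have hXA : X = A := by rw [hX, if_pos hodd, Nat.add_sub_cancel]
    have hpow : ((-1 : ℂ)) ^ m = 1 := Even.neg_one_pow hm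
    constructor
    · rw [hXA, hkk, ← one_smul ℂ A, key 1, hpow]
      match_scalars
      simp only [map_one]
      ring
    · rw [hY, hXA, key Complex.I, hpow, Complex.conj_I]
      match_scalars
      ring
  · -- m odd, k = m+1 even
    have hno : ¬ Odd (m + 1) := by
      simp [Nat.even_add_one, Nat.not_even_iff_odd.2 hm]
    have hXA : X = Complex.I • A := by rw [hX, if_neg hno, Nat.add_sub_cancel]
    have hpow : ((-1 : ℂ)) ^ m = -1 := Odd.neg_one_pow hm
    have hYA : Y = ((-1 : ℂ)) • A := by
      rw [hY, hXA, smul_smul, Complex.I_mul_I]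
    constructor
    · rw [hXA, hkk, key Complex.I, hpow, Complex.conj_I]
      match_scalars
      ring
    · rw [hYA, key (-1), hpow]
      match_scalars
      simp only [map_neg, map_one]
      ring
end
end

section
/- For every X ∈ V_2 and every l ∈ {1, …, I}: X ∈ ⊕_{q=1}^{l} (E^q_0 ⊕ E^q_+) if and only if ad(Ω_+)^{κ_l + 2}(c(X)) = 0. -/
noncomputable section

/-- The vector `X^{(j)} = ξ^j_{k_j−1}` (multiplied by `i` when `k_j` is even). -/
def Xv {𝔤 : Type*} [LieRing 𝔤] [LieAlgebra ℂ 𝔤] (Ωm : 𝔤) {N : ℕ}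
    (k : Fin N → ℕ) (ξ : Fin N → 𝔤) (j : Fin N) : 𝔤 :=
  if Odd (k j) then xiVec Ωm (ξ j) (k j - 1) else Complex.I • xiVec Ωm (ξ j) (k j - 1)

/-- The vector `Y^{(j)} = i X^{(j)}`. -/
def Yv {𝔤 : Type*} [LieRing 𝔤] [LieAlgebra ℂ 𝔤] (Ωm : 𝔤) {N : ℕ}
    (k : Fin N → ℕ) (ξ : Fin N → 𝔤) (j : Fin N) : 𝔤 :=
  Complex.I • Xv Ωm k ξ j

/-- `E^l_+` : the real span of the vectors `X^{(j)}` with `k_j = κ_l`. -/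
def Eplus {𝔤 : Type*} [LieRing 𝔤] [LieAlgebra ℂ 𝔤] (Ωm : 𝔤) {N I : ℕ}
    (k : Fin N → ℕ) (ξ : Fin N → 𝔤) (κ : Fin I → ℕ) (l : Fin I) : Submodule ℝ 𝔤 :=
  Submodule.span ℝ (Xv Ωm k ξ '' {j | k j = κ l})

/-- `E^l_0` : the real span of the vectors `Y^{(j)}` with `k_j = κ_l`. -/
def Ezero {𝔤 : Type*} [LieRing 𝔤] [LieAlgebra ℂ 𝔤] (Ωm : 𝔤) {N I : ℕ}
    (k : Fin N → ℕ) (ξ : Fin N → 𝔤) (κ : Fin I → ℕ) (l : Fin I) : Submodule ℝ 𝔤 :=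
  Submodule.span ℝ (Yv Ωm k ξ '' {j | k j = κ l})

/-- The (direct) sum `⊕_{q=1}^{l} (E^q_0 ⊕ E^q_+)`. -/
def Dsum {𝔤 : Type*} [LieRing 𝔤] [LieAlgebra ℂ 𝔤] (Ωm : 𝔤) {N I : ℕ}
    (k : Fin N → ℕ) (ξ : Fin N → 𝔤) (κ : Fin I → ℕ) (l : Fin I) : Submodule ℝ 𝔤 :=
  ⨆ q : Fin I, ⨆ _ : q ≤ l, (Ezero Ωm k ξ κ q ⊔ Eplus Ωm k ξ κ q)


section AuxLemmas

open LieAlgebra LieModule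

variable {𝔤 : Type*} [LieRing 𝔤] [LieAlgebra ℂ 𝔤]

lemma adPow_zero (Y X : 𝔤) : adPow Y 0 X = X := rfl

lemma adPow_succ (Y : 𝔤) (l : ℕ) (X : 𝔤) : adPow Y (l + 1) X = ⁅Y, adPow Y l X⁆ := by
  simp only [adPow, pow_succ', Module.End.mul_apply, LieAlgebra.ad_apply]

lemma adPow_eq_toEnd (Y : 𝔤) (l : ℕ) (X : 𝔤) :
    adPow Y l X = ((LieModule.toEnd ℂ 𝔤 𝔤 Y) ^ l) X := rfl

lemma adPow_smul (Y : 𝔤) (l : ℕ) (z : ℂ) (X : 𝔤) :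
    adPow Y l (z • X) = z • adPow Y l X := by
  simp [adPow]

lemma adPow_zero_vec (Y : 𝔤) (l : ℕ) : adPow Y l (0 : 𝔤) = 0 := by
  simp [adPow]

lemma adPow_add (Y : 𝔤) (l : ℕ) (A B : 𝔤) :
    adPow Y l (A + B) = adPow Y l A + adPow Y l B := by
  simp [adPow]

variable {W₀ Ωp Ωm : 𝔤} {t : IsSl2Triple W₀ Ωp Ωm} {ξ : 𝔤} {kk : ℕ}

lemma ePow (P : t.HasPrimitiveVectorWith ξ ((2 * kk : ℕ) : ℂ)) :
    ∀ r n : ℕ, r ≤ n →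
      ∃ z : ℂ, adPow Ωp r (adPow Ωm n ξ) = z • adPow Ωm (n - r) ξ ∧
        (n ≤ 2 * kk → z ≠ 0) := by
  intro r
  induction r with
  | zero =>
    intro n _
    exact ⟨1, by simp [adPow_zero], fun _ => one_ne_zero⟩
  | succ r ih =>
    intro n hn
    obtain ⟨z, hz, hz0⟩ := ih n (le_trans (Nat.le_succ r) hn)
    set m := n - (r + 1) with hm
    have hnr : n - r = m + 1 := by omega
    have hlie : ⁅Ωp, adPow Ωm (m + 1) ξ⁆ =
        (((m : ℂ) + 1) * (((2 * kk : ℕ) : ℂ) - m)) • adPow Ωm m ξ := by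
      simpa [adPow_eq_toEnd] using P.lie_e_pow_succ_toEnd_f m
    refine ⟨z * (((m : ℂ) + 1) * (((2 * kk : ℕ) : ℂ) - m)), ?_, ?_⟩
    · rw [adPow_succ, hz, hnr, lie_smul, hlie, smul_smul]
    · intro hn2
      have hmlt : m < 2 * kk := by omega
      refine mul_ne_zero (hz0 hn2) (mul_ne_zero (Nat.cast_add_one_ne_zero m) ?_)
      rw [sub_ne_zero]
      have hne : (2 * kk : ℕ) ≠ m := (Nat.ne_of_lt hmlt).symm
      exact_mod_cast hne

lemma eKill (P : t.HasPrimitiveVectorWith ξ ((2 * kk : ℕ) : ℂ)) :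
    ∀ r n : ℕ, n < r → adPow Ωp r (adPow Ωm n ξ) = 0 := by
  have base : ∀ n : ℕ, adPow Ωp (n + 1) (adPow Ωm n ξ) = 0 := by
    intro n
    obtain ⟨z, hz, -⟩ := ePow P n n le_rfl
    rw [adPow_succ, hz, Nat.sub_self, adPow_zero, lie_smul, P.lie_e, smul_zero]
  intro r n hn
  obtain ⟨s, rfl⟩ : ∃ s, r = s + (n + 1) := ⟨r - (n + 1), by omega⟩
  have : adPow Ωp (s + (n + 1)) (adPow Ωm n ξ) =
      adPow Ωp s (adPow Ωp (n + 1) (adPow Ωm n ξ)) := by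
    simp [adPow, pow_add]
  rw [this, base, adPow_zero_vec]

lemma psi_ne_zero [FiniteDimensional ℂ 𝔤] (P : t.HasPrimitiveVectorWith ξ ((2 * kk : ℕ) : ℂ))
    {i : ℕ} (hi : i ≤ 2 * kk) : adPow Ωm i ξ ≠ 0 := by
  have := P.pow_toEnd_f_ne_zero_of_eq_nat (n := 2 * kk) rfl hi
  simpa [adPow_eq_toEnd] using this

lemma sum_eq_zero_of_iSupIndep {ι : Type*} [Fintype ι] [DecidableEq ι]
    {M : Type*} [AddCommGroup M] [Module ℂ M] {p : ι → Submodule ℂ M}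
    (h : iSupIndep p) (x : ι → M) (hx : ∀ i, x i ∈ p i)
    (hsum : ∑ i, x i = 0) : ∀ i, x i = 0 := by
  intro i
  have hxi : x i = -∑ j ∈ Finset.univ.erase i, x j := by
    have h2 := Finset.add_sum_erase Finset.univ x (Finset.mem_univ i)
    rw [hsum] at h2
    exact eq_neg_of_add_eq_zero_left h2
  have hmem : x i ∈ ⨆ (j) (_ : j ≠ i), p j := by
    rw [hxi]
    refine neg_mem (Submodule.sum_mem _ fun j hj => ?_)
    exact Submodule.mem_iSup_of_mem j
      (Submodule.mem_iSup_of_mem (Finset.ne_of_mem_erase hj) (hx j))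
  exact Submodule.disjoint_def.mp (h i) _ (hx i) hmem

end AuxLemmas

/-- Lemma 4: for X ∈ V₂, X lies in ⊕_{q=1}^{l} (E^q₀ ⊕ E^q₊) iff
ad(Ω₊)^{κ_l + 2}(c(X)) = 0. -/
theorem mem_Dsum_iff_adPow_conj_eq_zero
    (𝔤 : Type*) [LieRing 𝔤] [LieAlgebra ℂ 𝔤] [FiniteDimensional ℂ 𝔤]
    [LieAlgebra.IsSemisimple ℂ 𝔤]
    (c : 𝔤 → 𝔤)
    (hc_add : ∀ X Y : 𝔤, c (X + Y) = c X + c Y)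
    (hc_smul : ∀ (z : ℂ) (X : 𝔤), c (z • X) = (starRingEnd ℂ z) • c X)
    (hc_lie : ∀ X Y : 𝔤, c ⁅X, Y⁆ = ⁅c X, c Y⁆)
    (hc_invol : ∀ X : 𝔤, c (c X) = X)
    (B : 𝔤 →ₗ[ℂ] 𝔤 →ₗ[ℂ] ℂ)
    (hB_symm : ∀ X Y : 𝔤, B X Y = B Y X)
    (hB_inv : ∀ X Y Z : 𝔤, B ⁅X, Y⁆ Z = B X ⁅Y, Z⁆)
    (hB_pos : ∀ X : 𝔤, X ≠ 0 → 0 < (-(B (c X) X)).re ∧ (B (c X) X).im = 0)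
    (W₀ Ωp Ωm : 𝔤)
    (hW0p : ⁅W₀, Ωp⁆ = (2 : ℂ) • Ωp)
    (hW0m : ⁅W₀, Ωm⁆ = (-2 : ℂ) • Ωm)
    (hpm : ⁅Ωp, Ωm⁆ = W₀)
    (hcΩ : c Ωp = -Ωm)
    (N : ℕ) (k : Fin (N + 1) → ℕ) (ξ : Fin (N + 1) → 𝔤)
    (hk0 : k 0 = 1) (hkmono : Monotone k)
    (hhw : ∀ j, ⁅Ωp, ξ j⁆ = 0 ∧ ⁅W₀, ξ j⁆ = ((2 * k j : ℕ) : ℂ) • ξ j)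
    (hindep : iSupIndep fun j => Submodule.span ℂ (Set.range fun l => xiVec Ωm (ξ j) l))
    (hconj : ∀ j, ∀ l ≤ 2 * k j,
      c (xiVec Ωm (ξ j) l) = ((-1 : ℂ)) ^ l • xiVec Ωm (ξ j) (2 * k j - l))
    (hbasisli : LinearIndependent ℂ fun j => xiVec Ωm (ξ j) (k j - 1))
    (hbasissp : Submodule.span ℂ (Set.range fun j => xiVec Ωm (ξ j) (k j - 1)) = Vspace W₀ 2)
    (I : ℕ) (κ : Fin (I + 1) → ℕ) (hκ : StrictMono κ)
    (hkκ : ∀ j, ∃ l, k j = κ l) (hκk : ∀ l, ∃ j, k j = κ l)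
    :
    ∀ X : 𝔤, X ∈ Vspace W₀ 2 → ∀ l : Fin (I + 1),
      (X ∈ Dsum Ωm k ξ κ l ↔ adPow Ωp (κ l + 2) (c X) = 0) := by
  intro X hX l
  classical
  have hk1 : ∀ j, 1 ≤ k j := fun j => hk0 ▸ hkmono (Fin.zero_le j)
  have hξv : ∀ j, xiVec Ωm (ξ j) (k j - 1) ≠ 0 := fun j => hbasisli.ne_zero j
  have hξne : ∀ j, ξ j ≠ 0 := by
    intro j hj
    exact hξv j (by rw [xiVec, hj, adPow_zero_vec, smul_zero])
  have hW0 : W₀ ≠ 0 := by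
    intro h
    apply hξne 0
    have h2 := (hhw 0).2
    rw [h, zero_lie, hk0] at h2
    have h3 : ((2 : ℕ) : ℂ) • ξ 0 = 0 := by
      simpa using h2.symm
    simpa using (smul_eq_zero.mp h3).resolve_left (by norm_num)
  have tW : IsSl2Triple W₀ Ωp Ωm :=
    { h_ne_zero := hW0
      lie_e_f := hpm
      lie_h_e_nsmul := by rw [hW0p, two_smul, two_nsmul]
      lie_h_f_nsmul := by rw [hW0m, neg_smul, two_smul, two_nsmul] }
  have P : ∀ j, tW.HasPrimitiveVectorWith (ξ j) ((2 * k j : ℕ) : ℂ) :=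
    fun j => ⟨hξne j, (hhw j).2, (hhw j).1⟩
  have hc0 : c 0 = 0 := by
    have h := hc_add 0 0
    rw [add_zero] at h
    have h2 : c 0 + 0 = c 0 + c 0 := by rw [add_zero]; exact h
    exact (add_left_cancel h2).symm
  have creal : ∀ (r : ℝ) (Z : 𝔤), c (r • Z) = r • c Z := by
    intro r Z
    rw [← algebraMap_smul ℂ r Z, Complex.coe_algebraMap, hc_smul, Complex.conj_ofReal,
      ← Complex.coe_algebraMap, algebraMap_smul]
  have hconjXi : ∀ j, c (xiVec Ωm (ξ j) (k j - 1)) =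
      ((-1 : ℂ)) ^ (k j - 1) • xiVec Ωm (ξ j) (k j + 1) := by
    intro j
    have h2 : 2 * k j - (k j - 1) = k j + 1 := by have := hk1 j; omega
    rw [hconj j _ (by omega), h2]
  have hkill : ∀ (j : Fin (N + 1)) (r : ℕ), k j + 1 < r →
      adPow Ωp r (xiVec Ωm (ξ j) (k j + 1)) = 0 := by
    intro j r hr
    rw [xiVec, adPow_smul, eKill (P j) r (k j + 1) hr, smul_zero]
  have hcXv : ∀ j, ∃ z : ℂ, c (Xv Ωm k ξ j) = z • xiVec Ωm (ξ j) (k j + 1) := by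
    intro j
    rw [Xv]
    by_cases h : Odd (k j)
    · rw [if_pos h, hconjXi j]; exact ⟨_, rfl⟩
    · rw [if_neg h, hc_smul, hconjXi j, smul_smul]; exact ⟨_, rfl⟩
  have hcYv : ∀ j, ∃ z : ℂ, c (Yv Ωm k ξ j) = z • xiVec Ωm (ξ j) (k j + 1) := by
    intro j
    obtain ⟨z, hz⟩ := hcXv j
    rw [Yv, hc_smul, hz, smul_smul]
    exact ⟨_, rfl⟩
  constructor
  · -- forward direction
    intro hXD
    let K : Submodule ℝ 𝔤 :=
      { carrier := {Z | adPow Ωp (κ l + 2) (c Z) = 0}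
        add_mem' := by
          intro A B hA hB
          simp only [Set.mem_setOf_eq] at *
          rw [hc_add, adPow_add, hA, hB, add_zero]
        zero_mem' := by
          simp only [Set.mem_setOf_eq]
          rw [hc0, adPow_zero_vec]
        smul_mem' := by
          intro r Z hZ
          simp only [Set.mem_setOf_eq] at *
          rw [creal, ← algebraMap_smul ℂ r (c Z), Complex.coe_algebraMap, adPow_smul, hZ,
            smul_zero] }
    suffices hDK : Dsum Ωm k ξ κ l ≤ K from hDK hXD
    apply iSup_le
    intro q
    apply iSup_le
    intro hql
    have hκq : κ q ≤ κ l := hκ.monotone hql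
    apply sup_le <;> [rw [Ezero, Submodule.span_le]; rw [Eplus, Submodule.span_le]] <;>
      rintro v ⟨j, hj, rfl⟩
    · obtain ⟨z, hz⟩ := hcYv j
      show adPow Ωp (κ l + 2) (c (Yv Ωm k ξ j)) = 0
      rw [hz, adPow_smul, hkill j _ (by simp only [Set.mem_setOf_eq] at hj; omega), smul_zero]
    · obtain ⟨z, hz⟩ := hcXv j
      show adPow Ωp (κ l + 2) (c (Xv Ωm k ξ j)) = 0
      rw [hz, adPow_smul, hkill j _ (by simp only [Set.mem_setOf_eq] at hj; omega), smul_zero]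
  · -- backward direction
    intro h0
    rw [← hbasissp] at hX
    obtain ⟨a, ha⟩ := (Submodule.mem_span_range_iff_exists_fun ℂ).mp hX
    let F : 𝔤 →+ 𝔤 :=
      { toFun := fun Z => adPow Ωp (κ l + 2) (c Z)
        map_zero' := by show adPow Ωp (κ l + 2) (c 0) = 0; rw [hc0, adPow_zero_vec]
        map_add' := fun A B => by show adPow Ωp (κ l + 2) (c (A + B)) = adPow Ωp (κ l + 2) (c A) + adPow Ωp (κ l + 2) (c B); rw [hc_add, adPow_add] }
    have hFX : ∑ j, F (a j • xiVec Ωm (ξ j) (k j - 1)) = 0 := by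
      rw [← map_sum, ha]
      exact h0
    have hterm : ∀ j, ∃ w : ℂ,
        F (a j • xiVec Ωm (ξ j) (k j - 1)) =
          ((starRingEnd ℂ (a j)) * w) • adPow Ωm (k j + 1 - (κ l + 2)) (ξ j) ∧
        (κ l < k j → w ≠ 0) := by
      intro j
      have hF1 : F (a j • xiVec Ωm (ξ j) (k j - 1)) =
          (starRingEnd ℂ (a j) * ((-1 : ℂ) ^ (k j - 1) * (((k j + 1).factorial : ℂ))⁻¹)) •
            adPow Ωp (κ l + 2) (adPow Ωm (k j + 1) (ξ j)) := by
        show adPow Ωp (κ l + 2) (c (a j • xiVec Ωm (ξ j) (k j - 1))) = _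
        rw [hc_smul, hconjXi j, xiVec, smul_smul, smul_smul, adPow_smul, mul_assoc]
      by_cases hcase : κ l < k j
      · obtain ⟨z, hz, hz0⟩ := ePow (P j) (κ l + 2) (k j + 1) (by omega)
        refine ⟨(-1 : ℂ) ^ (k j - 1) * (((k j + 1).factorial : ℂ))⁻¹ * z, ?_, fun _ => ?_⟩
        · rw [hF1, hz, smul_smul, mul_assoc, mul_assoc]
        · refine mul_ne_zero (mul_ne_zero (pow_ne_zero _ (by norm_num))
            (inv_ne_zero (Nat.cast_ne_zero.mpr (Nat.factorial_ne_zero _)))) ?_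
          exact hz0 (by have := hk1 j; omega)
      · refine ⟨0, ?_, fun h => absurd h hcase⟩
        rw [hF1, eKill (P j) (κ l + 2) (k j + 1) (by omega), smul_zero, mul_zero, zero_smul]
    have hmemspan : ∀ j, F (a j • xiVec Ωm (ξ j) (k j - 1)) ∈
        Submodule.span ℂ (Set.range fun l => xiVec Ωm (ξ j) l) := by
      intro j
      obtain ⟨w, hw, -⟩ := hterm j
      rw [hw]
      refine Submodule.smul_mem _ _ ?_
      have hψ : adPow Ωm (k j + 1 - (κ l + 2)) (ξ j) =
          (((k j + 1 - (κ l + 2)).factorial : ℂ)) • xiVec Ωm (ξ j) (k j + 1 - (κ l + 2)) := by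
        rw [xiVec, smul_smul, mul_inv_cancel₀
          (Nat.cast_ne_zero.mpr (Nat.factorial_ne_zero _)), one_smul]
      rw [hψ]
      exact Submodule.smul_mem _ _ (Submodule.subset_span ⟨_, rfl⟩)
    have hzero := sum_eq_zero_of_iSupIndep hindep _ hmemspan hFX
    have hajs : ∀ j, κ l < k j → a j = 0 := by
      intro j hj
      obtain ⟨w, hw, hwne⟩ := hterm j
      have hz0 := hzero j
      simp only [hw] at hz0
      have hψne : adPow Ωm (k j + 1 - (κ l + 2)) (ξ j) ≠ 0 :=
        psi_ne_zero (P j) (by have := hk1 j; omega)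
      have := (smul_eq_zero.mp hz0).resolve_right hψne
      have hca : starRingEnd ℂ (a j) = 0 :=
        (mul_eq_zero.mp this).resolve_right (hwne hj)
      simpa using hca
    rw [← ha]
    apply Submodule.sum_mem
    intro j _
    by_cases hj : κ l < k j
    · rw [hajs j hj, zero_smul]
      exact zero_mem _
    · obtain ⟨q, hq⟩ := hkκ j
      have hql : q ≤ l := by
        by_contra h
        push_neg at h
        have := hκ h
        omega
      have hsub : Ezero Ωm k ξ κ q ⊔ Eplus Ωm k ξ κ q ≤ Dsum Ωm k ξ κ l :=
        le_trans (le_iSup (fun _ : q ≤ l => Ezero Ωm k ξ κ q ⊔ Eplus Ωm k ξ κ q) hql)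
          (le_iSup (fun q => ⨆ _ : q ≤ l, Ezero Ωm k ξ κ q ⊔ Eplus Ωm k ξ κ q) q)
      apply hsub
      have hXvm : Xv Ωm k ξ j ∈ Ezero Ωm k ξ κ q ⊔ Eplus Ωm k ξ κ q :=
        Submodule.mem_sup_right (Submodule.subset_span ⟨j, hq, rfl⟩)
      have hYvm : Yv Ωm k ξ j ∈ Ezero Ωm k ξ κ q ⊔ Eplus Ωm k ξ κ q :=
        Submodule.mem_sup_left (Submodule.subset_span ⟨j, hq, rfl⟩)
      set v := xiVec Ωm (ξ j) (k j - 1) with hv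
      have hvm : v ∈ Ezero Ωm k ξ κ q ⊔ Eplus Ωm k ξ κ q ∧
          Complex.I • v ∈ Ezero Ωm k ξ κ q ⊔ Eplus Ωm k ξ κ q := by
        by_cases hodd : Odd (k j)
        · constructor
          · rw [hv]
            have : Xv Ωm k ξ j = xiVec Ωm (ξ j) (k j - 1) := by rw [Xv, if_pos hodd]
            exact this ▸ hXvm
          · have : Yv Ωm k ξ j = Complex.I • xiVec Ωm (ξ j) (k j - 1) := by
              rw [Yv, Xv, if_pos hodd]
            exact this ▸ hYvm
        · have hx : Xv Ωm k ξ j = Complex.I • xiVec Ωm (ξ j) (k j - 1) := by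
            rw [Xv, if_neg hodd]
          constructor
          · have : Yv Ωm k ξ j = -v := by
              rw [Yv, hx, smul_smul, Complex.I_mul_I, neg_one_smul]
            have h2 : v = -Yv Ωm k ξ j := by rw [this, neg_neg]
            rw [h2]
            exact neg_mem hYvm
          · exact hx ▸ hXvm
      have hdecomp : a j • v = (a j).re • v + (a j).im • (Complex.I • v) := by
        rw [← Complex.coe_smul ((a j).re) v, ← Complex.coe_smul ((a j).im) (Complex.I • v),
          smul_smul, ← add_smul, Complex.re_add_im]
      rw [hdecomp]
      exact add_mem (Submodule.smul_mem _ _ hvm.1) (Submodule.smul_mem _ _ hvm.2)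
end
end

section
/- Let 0 < r₀ < r₁ and let (m, S, ω_1,…,ω_L, E_1,…,E_L) be a C² solution of the field equations on [r₀, r₁) with S(r₀) > 0 and inf_{r ∈ [r₀, r₁)} μ(r) > 0. Then: m is nondecreasing and bounded on [r₀, r₁); S is nondecreasing and bounded on [r₀, r₁); and each of the functions ω_i, ω_i′, E_i, E_i′ (i = 1,…,L) is bounded on [r₀, r₁). Consequently the solution extends regularly to r = r₁. -/
noncomputable section

open Filter Asymptotics

/-- The metric function μ(r) = k − 2m(r)/r + r²/ℓ². -/
def muF (k ℓ : ℝ) (m : ℝ → ℝ) (r : ℝ) : ℝ := k - 2 * m r / r + r ^ 2 / ℓ ^ 2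

/-- η = Σᵢⱼ Eᵢ′ (C⁻¹)ᵢⱼ Eⱼ′/|αⱼ|². -/
def etaF {L : ℕ} (C : Matrix (Fin L) (Fin L) ℝ) (alpha2 : Fin L → ℝ)
    (E : Fin L → ℝ → ℝ) (r : ℝ) : ℝ :=
  ∑ i, ∑ j, deriv (E i) r * (C⁻¹ i j) * deriv (E j) r / alpha2 j

/-- ζ = Σᵢ Eᵢ² ωᵢ²/|αᵢ|². -/
def zetaF {L : ℕ} (alpha2 : Fin L → ℝ) (ω E : Fin L → ℝ → ℝ) (r : ℝ) : ℝ :=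
  ∑ i, (E i r) ^ 2 * (ω i r) ^ 2 / alpha2 i

/-- G = Σᵢ (ωᵢ′)²/|αᵢ|². -/
def GF {L : ℕ} (alpha2 : Fin L → ℝ) (ω : Fin L → ℝ → ℝ) (r : ℝ) : ℝ :=
  ∑ i, (deriv (ω i) r) ^ 2 / alpha2 i

/-- P = (1/8) Σᵢⱼ (k wᵢ − ωᵢ²) hᵢⱼ (k wⱼ − ωⱼ²), where hᵢⱼ = 2Cᵢⱼ/|αⱼ|². -/
def PF {L : ℕ} (C : Matrix (Fin L) (Fin L) ℝ) (alpha2 : Fin L → ℝ) (w : Fin L → ℝ)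
    (k : ℝ) (ω : Fin L → ℝ → ℝ) (r : ℝ) : ℝ :=
  (1 / 8) * ∑ i, ∑ j, (k * w i - (ω i r) ^ 2) * (2 * C i j / alpha2 j) * (k * w j - (ω j r) ^ 2)

/-- Fᵢ = (ωᵢ/2) Σⱼ Cᵢⱼ (k wⱼ − ωⱼ²). -/
def FF {L : ℕ} (C : Matrix (Fin L) (Fin L) ℝ) (w : Fin L → ℝ) (k : ℝ)
    (ω : Fin L → ℝ → ℝ) (i : Fin L) (r : ℝ) : ℝ :=
  (ω i r / 2) * ∑ j, C i j * (k * w j - (ω j r) ^ 2)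

/-- Zᵢ = Σⱼ Cᵢⱼ Eⱼ ωⱼ². -/
def ZF {L : ℕ} (C : Matrix (Fin L) (Fin L) ℝ) (ω E : Fin L → ℝ → ℝ)
    (i : Fin L) (r : ℝ) : ℝ :=
  ∑ j, C i j * E j r * (ω j r) ^ 2

/-- The static topological dyonic adS Einstein–Yang–Mills field equations at radius `r`. -/
def FieldEqnsAt {L : ℕ} (C : Matrix (Fin L) (Fin L) ℝ) (alpha2 w : Fin L → ℝ) (k ℓ : ℝ)
    (m S : ℝ → ℝ) (ω E : Fin L → ℝ → ℝ) (r : ℝ) : Prop :=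
  deriv m r = r ^ 2 * etaF C alpha2 E r / (S r) ^ 2
      + zetaF alpha2 ω E r / (muF k ℓ m r * (S r) ^ 2)
      + muF k ℓ m r * GF alpha2 ω r + PF C alpha2 w k ω r / r ^ 2 ∧
  deriv S r / S r = 2 * GF alpha2 ω r / r
      + 2 * zetaF alpha2 ω E r / ((muF k ℓ m r) ^ 2 * (S r) ^ 2 * r) ∧
  (∀ i, deriv (deriv (E i)) r
      + (2 / r) * (1 - GF alpha2 ω r - zetaF alpha2 ω E r / ((muF k ℓ m r) ^ 2 * (S r) ^ 2))
        * deriv (E i) r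
      - ZF C ω E i r / (muF k ℓ m r * r ^ 2) = 0) ∧
  (∀ i, r ^ 2 * muF k ℓ m r * deriv (deriv (ω i)) r
      + 2 * (m r - PF C alpha2 w k ω r / r - r ^ 3 * etaF C alpha2 E r / (S r) ^ 2 + r ^ 3 / ℓ ^ 2)
        * deriv (ω i) r
      + r ^ 2 * (E i r) ^ 2 * ω i r / (muF k ℓ m r * (S r) ^ 2) + FF C w k ω i r = 0)


section AuxLemmas
open Filter Set

/-- A function monotone and bounded above on `Ico a b` has a limit from the left at `b`. -/
lemma monoOn_tendsto {f : ℝ → ℝ} {a b M : ℝ} (hab : a < b)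
    (hm : MonotoneOn f (Set.Ico a b)) (hM : ∀ x ∈ Set.Ico a b, f x ≤ M) :
    ∃ l, Filter.Tendsto f (nhdsWithin b (Set.Iio b)) (nhds l) := by
  have hmem : ∀ x ∈ Set.Iio b, max a x ∈ Set.Ico a b :=
    fun x hx => ⟨le_max_left _ _, max_lt hab hx⟩
  have hgm : MonotoneOn (fun x => f (max a x)) (Set.Iio b) :=
    fun x hx y hy hxy => hm (hmem x hx) (hmem y hy) (max_le_max le_rfl hxy)
  have hbdd : BddAbove ((fun x => f (max a x)) '' Set.Iio b) := by
    refine ⟨M, ?_⟩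
    rintro y ⟨x, hx, rfl⟩
    exact hM _ (hmem x hx)
  refine ⟨_, (hgm.tendsto_nhdsLT hbdd).congr' ?_⟩
  filter_upwards [Ioo_mem_nhdsLT hab] with x hx
  simp [max_eq_right hx.1.le]

/-- A function with bounded derivative on `Ioo a b`, continuous on `Ico a b`, is bounded
and has a limit at `b⁻`. -/
lemma bound_of_deriv_bound {f : ℝ → ℝ} {a b B : ℝ} (hab : a < b)
    (hc : ContinuousOn f (Set.Ico a b))
    (hd : ∀ x ∈ Set.Ioo a b, DifferentiableAt ℝ f x)
    (hB : ∀ x ∈ Set.Ioo a b, |deriv f x| ≤ B) :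
    (∀ x ∈ Set.Ico a b, |f x| ≤ |f a| + B * (b - a)) ∧
      ∃ l, Filter.Tendsto f (nhdsWithin b (Set.Iio b)) (nhds l) := by
  have hB0 : 0 ≤ B := by
    obtain ⟨x, hx⟩ := nonempty_Ioo.2 hab
    exact (abs_nonneg _).trans (hB x hx)
  have hdp : ∀ x ∈ Set.Ioo a b, DifferentiableAt ℝ (fun y => f y + B * y) x :=
    fun x hx => (hd x hx).add ((differentiable_id.const_mul B).differentiableAt)
  have hdm : ∀ x ∈ Set.Ioo a b, DifferentiableAt ℝ (fun y => f y - B * y) x :=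
    fun x hx => (hd x hx).sub ((differentiable_id.const_mul B).differentiableAt)
  have hderp : ∀ x ∈ Set.Ioo a b, deriv (fun y => f y + B * y) x = deriv f x + B := by
    intro x hx
    have h1 : HasDerivAt (fun y => f y + B * y) (deriv f x + B * 1) x :=
      ((hd x hx).hasDerivAt).add ((hasDerivAt_id x).const_mul B)
    simpa using h1.deriv
  have hderm : ∀ x ∈ Set.Ioo a b, deriv (fun y => f y - B * y) x = deriv f x - B := by
    intro x hx
    have h1 : HasDerivAt (fun y => f y - B * y) (deriv f x - B * 1) x :=
      ((hd x hx).hasDerivAt).sub ((hasDerivAt_id x).const_mul B)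
    simpa using h1.deriv
  have hgp : MonotoneOn (fun y => f y + B * y) (Set.Ico a b) := by
    apply monotoneOn_of_deriv_nonneg (convex_Ico a b)
        (hc.add (continuous_const.mul continuous_id).continuousOn)
    · rw [interior_Ico]
      exact fun x hx => (hdp x hx).differentiableWithinAt
    · rw [interior_Ico]
      intro x hx
      have h2 : deriv (fun x => f x + B * x) x = deriv f x + B := hderp x hx
      rw [show (f + (fun x => B) * id) = (fun x => f x + B * x) from rfl, h2]
      have := (abs_le.1 (hB x hx)).1
      linarith
  have hgm2 : AntitoneOn (fun y => f y - B * y) (Set.Ico a b) := by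
    apply antitoneOn_of_deriv_nonpos (convex_Ico a b)
        (hc.sub (continuous_const.mul continuous_id).continuousOn)
    · rw [interior_Ico]
      exact fun x hx => (hdm x hx).differentiableWithinAt
    · rw [interior_Ico]
      intro x hx
      have h2 : deriv (fun x => f x - B * x) x = deriv f x - B := hderm x hx
      rw [show (f - (fun x => B) * id) = (fun x => f x - B * x) from rfl, h2]
      have := (abs_le.1 (hB x hx)).2
      linarith
  have haI : a ∈ Set.Ico a b := ⟨le_rfl, hab⟩
  have hbound : ∀ x ∈ Set.Ico a b, |f x| ≤ |f a| + B * (b - a) := by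
    intro x hx
    have h1 := hgp haI hx hx.1
    have h2 := hgm2 haI hx hx.1
    simp only at h1 h2
    have hxa : x - a ≤ b - a := by have := hx.2; linarith
    have hxa0 : 0 ≤ x - a := by have := hx.1; linarith
    have hfa1 : f a ≤ |f a| := le_abs_self _
    have hfa2 : -|f a| ≤ f a := neg_abs_le _
    rw [abs_le]
    constructor
    · nlinarith [mul_le_mul_of_nonneg_left hxa hB0]
    · nlinarith [mul_le_mul_of_nonneg_left hxa hB0]
  refine ⟨hbound, ?_⟩
  obtain ⟨l, hl⟩ := monoOn_tendsto hab hgp (fun x hx => by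
    have := hbound x hx
    have : f x ≤ |f a| + B * (b - a) := (le_abs_self _).trans this
    have hxb : B * x ≤ B * b := mul_le_mul_of_nonneg_left hx.2.le hB0
    show f x + B * x ≤ |f a| + B * (b - a) + B * b
    linarith)
  refine ⟨l - B * b, ?_⟩
  have h2 : Filter.Tendsto (fun x => B * x) (nhdsWithin b (Set.Iio b)) (nhds (B * b)) :=
    ((continuous_const.mul continuous_id).tendsto b).mono_left nhdsWithin_le_nhds
  have h3 := hl.sub h2
  refine h3.congr (fun y => ?_)
  show f y + B * y - B * y = f y
  ring

lemma quadform_nonneg {L : ℕ} {H : Matrix (Fin L) (Fin L) ℝ} (h : H.PosSemidef) (x : Fin L → ℝ) :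
    0 ≤ ∑ i, ∑ j, x i * H i j * x j := by
  have h1 := h.dotProduct_mulVec_nonneg x
  have h2 : dotProduct (star x) (H.mulVec x) = ∑ i, ∑ j, x i * H i j * x j := by
    simp [dotProduct, Matrix.mulVec, Finset.mul_sum, mul_assoc]
  rw [h2] at h1
  exact h1

lemma hmat_inv {L : ℕ} (C : Matrix (Fin L) (Fin L) ℝ) (hC : IsUnit C.det)
    (alpha2 : Fin L → ℝ) (halpha : ∀ j, 0 < alpha2 j) :
    (Matrix.of fun i j => 2 * C i j / alpha2 j)⁻¹
      = Matrix.of fun i j => alpha2 i * (C⁻¹ i j) / 2 := by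
  apply Matrix.inv_eq_right_inv
  have hCC : C * C⁻¹ = 1 := Matrix.mul_nonsing_inv C hC
  ext i j
  rw [Matrix.mul_apply]
  have : ∀ k, (Matrix.of fun i j => 2 * C i j / alpha2 j) i k
      * (Matrix.of fun i j => alpha2 i * (C⁻¹ i j) / 2) k j = C i k * C⁻¹ k j := by
    intro k
    simp only [Matrix.of_apply]
    have := (halpha k).ne'
    field_simp
  rw [Finset.sum_congr rfl fun k _ => this k, ← Matrix.mul_apply, hCC]

lemma eta_nonneg {L : ℕ} (C : Matrix (Fin L) (Fin L) ℝ) (hC : IsUnit C.det)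
    (alpha2 : Fin L → ℝ) (halpha : ∀ j, 0 < alpha2 j)
    (hposdef : (Matrix.of fun i j => 2 * C i j / alpha2 j).PosDef)
    (x : Fin L → ℝ) :
    0 ≤ ∑ i, ∑ j, x i * (C⁻¹ i j) * x j / alpha2 j := by
  have hinv := (hposdef.inv).posSemidef
  rw [hmat_inv C hC alpha2 halpha] at hinv
  have h1 := quadform_nonneg hinv (fun i => x i / alpha2 i)
  have h2 : ∑ i, ∑ j, (x i / alpha2 i)
        * ((Matrix.of fun i j => alpha2 i * (C⁻¹ i j) / 2) i j) * (x j / alpha2 j)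
      = (1/2) * ∑ i, ∑ j, x i * (C⁻¹ i j) * x j / alpha2 j := by
    rw [Finset.mul_sum]
    refine Finset.sum_congr rfl fun i _ => ?_
    rw [Finset.mul_sum]
    refine Finset.sum_congr rfl fun j _ => ?_
    simp only [Matrix.of_apply]
    have hi := (halpha i).ne'
    have hj := (halpha j).ne'
    field_simp
  rw [h2] at h1
  linarith

lemma abs_div_le_of_bounds {a b n d : ℝ} (hn : |a| ≤ n) (hd0 : 0 < d) (hdb : d ≤ b) :
    |a / b| ≤ n / d := by
  rw [abs_div]
  have hb0 : 0 < b := lt_of_lt_of_le hd0 hdb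
  rw [abs_of_pos hb0]
  exact div_le_div₀ ((abs_nonneg a).trans hn) hn hd0 hdb

end AuxLemmas

set_option maxHeartbeats 1600000 in
/-- global regularity: a C² solution on `[r₀, r₁)` with `S(r₀) > 0` and
`inf μ > 0` has `m`, `S` nondecreasing and bounded, all gauge functions and their first
derivatives bounded, and all field variables extend (have limits) at `r = r₁`. -/
theorem global_regularity
    (L : ℕ) (hL : 1 ≤ L)
    (C : Matrix (Fin L) (Fin L) ℝ) (hC : IsUnit C.det)
    (alpha2 : Fin L → ℝ) (halpha : ∀ j, 0 < alpha2 j)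
    (hposdef : (Matrix.of fun i j => 2 * C i j / alpha2 j).PosDef)
    (w : Fin L → ℝ) (hw : ∀ j, 0 < w j)
    (k : ℝ) (hk : k = -1 ∨ k = 0 ∨ k = 1)
    (ℓ : ℝ) (hℓ : 0 < ℓ)
    (r₀ r₁ : ℝ) (hr₀ : 0 < r₀) (hr : r₀ < r₁)
    (m S : ℝ → ℝ) (ω E : Fin L → ℝ → ℝ)
    (hreg : ContDiffOn ℝ 2 m (Set.Ico r₀ r₁) ∧ ContDiffOn ℝ 2 S (Set.Ico r₀ r₁) ∧
      ∀ i, ContDiffOn ℝ 2 (ω i) (Set.Ico r₀ r₁) ∧ ContDiffOn ℝ 2 (E i) (Set.Ico r₀ r₁))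
    (hFE : ∀ r ∈ Set.Ico r₀ r₁, FieldEqnsAt C alpha2 w k ℓ m S ω E r)
    (hS₀ : 0 < S r₀) (hSpos : ∀ r ∈ Set.Ico r₀ r₁, 0 < S r)
    (hμ : ∃ δ > (0 : ℝ), ∀ r ∈ Set.Ico r₀ r₁, δ ≤ muF k ℓ m r) :
    MonotoneOn m (Set.Ico r₀ r₁) ∧ (∃ Cm, ∀ r ∈ Set.Ico r₀ r₁, |m r| ≤ Cm) ∧
    MonotoneOn S (Set.Ico r₀ r₁) ∧ (∃ Cs, ∀ r ∈ Set.Ico r₀ r₁, |S r| ≤ Cs) ∧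
    (∀ i, ∃ Cb, ∀ r ∈ Set.Ico r₀ r₁,
      |ω i r| ≤ Cb ∧ |deriv (ω i) r| ≤ Cb ∧ |E i r| ≤ Cb ∧ |deriv (E i) r| ≤ Cb) ∧
    (∃ mlim Slim : ℝ, Tendsto m (nhdsWithin r₁ (Set.Iio r₁)) (nhds mlim) ∧
      Tendsto S (nhdsWithin r₁ (Set.Iio r₁)) (nhds Slim)) ∧
    (∀ i, ∃ ωlim Elim : ℝ, Tendsto (ω i) (nhdsWithin r₁ (Set.Iio r₁)) (nhds ωlim) ∧
      Tendsto (E i) (nhdsWithin r₁ (Set.Iio r₁)) (nhds Elim)) := by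
  obtain ⟨hmreg, hSreg, hωEreg⟩ := hreg
  obtain ⟨δ, hδ, hμδ⟩ := hμ
  have hk1 : k ≤ 1 := by rcases hk with h|h|h <;> rw [h] <;> norm_num
  have hkabs : |k| ≤ 1 := by rcases hk with h|h|h <;> rw [h] <;> norm_num
  have hJI : Set.Ioo r₀ r₁ ⊆ Set.Ico r₀ r₁ := Set.Ioo_subset_Ico_self
  have hr₀I : r₀ ∈ Set.Ico r₀ r₁ := ⟨le_rfl, hr⟩
  have hrpos : ∀ x ∈ Set.Ico r₀ r₁, 0 < x := fun x hx => lt_of_lt_of_le hr₀ hx.1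
  have hμpos : ∀ x ∈ Set.Ico r₀ r₁, 0 < muF k ℓ m x :=
    fun x hx => lt_of_lt_of_le hδ (hμδ x hx)
  have hζ : ∀ x, 0 ≤ zetaF alpha2 ω E x := fun x =>
    Finset.sum_nonneg fun i _ => div_nonneg (mul_nonneg (sq_nonneg _) (sq_nonneg _)) (halpha i).le
  have hG : ∀ x, 0 ≤ GF alpha2 ω x := fun x =>
    Finset.sum_nonneg fun i _ => div_nonneg (sq_nonneg _) (halpha i).le
  have hη : ∀ x, 0 ≤ etaF C alpha2 E x := fun x =>
    eta_nonneg C hC alpha2 halpha hposdef (fun j => deriv (E j) x)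
  have hP : ∀ x, 0 ≤ PF C alpha2 w k ω x := by
    intro x
    have h1 := quadform_nonneg hposdef.posSemidef (fun i => k * w i - (ω i x) ^ 2)
    simp only [Matrix.of_apply] at h1
    unfold PF
    linarith
  -- differentiability infrastructure
  have hregs : ∀ f : ℝ → ℝ, ContDiffOn ℝ 2 f (Set.Ico r₀ r₁) →
      (∀ x ∈ Set.Ioo r₀ r₁, DifferentiableAt ℝ f x) ∧
      (∀ x ∈ Set.Ioo r₀ r₁, DifferentiableAt ℝ (deriv f) x) := by
    intro f hf
    have hfJ : ContDiffOn ℝ 2 f (Set.Ioo r₀ r₁) := hf.mono hJI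
    refine ⟨fun x hx => ?_, fun x hx => ?_⟩
    · exact (hfJ.differentiableOn (by norm_num)).differentiableAt (isOpen_Ioo.mem_nhds hx)
    · have h2 : ContDiffOn ℝ 1 (deriv f) (Set.Ioo r₀ r₁) :=
        hfJ.deriv_of_isOpen isOpen_Ioo (by norm_num)
      exact (h2.differentiableOn (by norm_num)).differentiableAt (isOpen_Ioo.mem_nhds hx)
  have hmd := hregs m hmreg
  have hSd := hregs S hSreg
  have hωd := fun i => hregs (ω i) (hωEreg i).1
  have hEd := fun i => hregs (E i) (hωEreg i).2
  -- m is nondecreasing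
  have hm'pos : ∀ x ∈ Set.Ico r₀ r₁, 0 ≤ deriv m x := by
    intro x hx
    rw [(hFE x hx).1]
    have h1 : 0 < S x := hSpos x hx
    have h2 := hμpos x hx
    have h3 := hrpos x hx
    apply add_nonneg (add_nonneg (add_nonneg ?_ ?_) ?_) ?_
    · exact div_nonneg (mul_nonneg (sq_nonneg x) (hη x)) (sq_nonneg _)
    · exact div_nonneg (hζ x) (mul_nonneg h2.le (sq_nonneg _))
    · exact mul_nonneg h2.le (hG x)
    · exact div_nonneg (hP x) (sq_nonneg _)
  have hmono_m : MonotoneOn m (Set.Ico r₀ r₁) := by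
    apply monotoneOn_of_deriv_nonneg (convex_Ico _ _) hmreg.continuousOn
    · rw [interior_Ico]; exact fun x hx => (hmd.1 x hx).differentiableWithinAt
    · rw [interior_Ico]; exact fun x hx => hm'pos x (hJI hx)
  -- m is bounded above
  have hBm : ∀ x ∈ Set.Ico r₀ r₁, m x ≤ r₁ * (1 + r₁ ^ 2 / ℓ ^ 2) / 2 := by
    intro x hx
    have h := hμδ x hx
    rw [muF] at h
    have hxp := hrpos x hx
    have hxr := hx.2
    have h' : 2 * m x / x ≤ 1 + x ^ 2 / ℓ ^ 2 - δ := by linarith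
    have h2 : 2 * m x ≤ (1 + x ^ 2 / ℓ ^ 2 - δ) * x := by
      calc 2 * m x = (2 * m x / x) * x := (div_mul_cancel₀ _ hxp.ne').symm
        _ ≤ (1 + x ^ 2 / ℓ ^ 2 - δ) * x := mul_le_mul_of_nonneg_right h' hxp.le
    have hl2 : 0 < ℓ ^ 2 := by positivity
    have hx3 : x ^ 3 ≤ r₁ ^ 3 := pow_le_pow_left₀ hxp.le hxr.le 3
    have hgoal : x + x ^ 3 / ℓ ^ 2 ≤ r₁ + r₁ ^ 3 / ℓ ^ 2 := by gcongr
    have hstep : (1 + x ^ 2 / ℓ ^ 2 - δ) * x ≤ r₁ * (1 + r₁ ^ 2 / ℓ ^ 2) := by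
      have hexp : (1 + x ^ 2 / ℓ ^ 2 - δ) * x = x + x ^ 3 / ℓ ^ 2 - δ * x := by ring
      have hexp2 : r₁ * (1 + r₁ ^ 2 / ℓ ^ 2) = r₁ + r₁ ^ 3 / ℓ ^ 2 := by ring
      nlinarith [mul_pos hδ hxp]
    linarith

  -- |m| bound and limit
  have hmabs : ∀ x ∈ Set.Ico r₀ r₁, |m x| ≤ |m r₀| + |r₁ * (1 + r₁ ^ 2 / ℓ ^ 2) / 2| := by
    intro x hx
    have h1 := hmono_m hr₀I hx hx.1
    have h2 := hBm x hx
    have h3 := neg_abs_le (m r₀)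
    have h4 := abs_nonneg (r₁ * (1 + r₁ ^ 2 / ℓ ^ 2) / 2)
    have h5 := le_abs_self (r₁ * (1 + r₁ ^ 2 / ℓ ^ 2) / 2)
    have h6 := abs_nonneg (m r₀)
    rw [abs_le]
    constructor <;> linarith
  obtain ⟨mlim, hmlim⟩ := monoOn_tendsto hr hmono_m hBm
  -- per-term bounds on m'
  have hterm : ∀ x ∈ Set.Ico r₀ r₁,
      muF k ℓ m x * GF alpha2 ω x ≤ deriv m x ∧
      zetaF alpha2 ω E x / (muF k ℓ m x * S x ^ 2) ≤ deriv m x ∧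
      x ^ 2 * etaF C alpha2 E x / S x ^ 2 ≤ deriv m x := by
    intro x hx
    have he := (hFE x hx).1
    have h2 := hμpos x hx
    have t1 : 0 ≤ x ^ 2 * etaF C alpha2 E x / S x ^ 2 :=
      div_nonneg (mul_nonneg (sq_nonneg x) (hη x)) (sq_nonneg _)
    have t2 : 0 ≤ zetaF alpha2 ω E x / (muF k ℓ m x * S x ^ 2) :=
      div_nonneg (hζ x) (mul_nonneg h2.le (sq_nonneg _))
    have t3 : 0 ≤ muF k ℓ m x * GF alpha2 ω x := mul_nonneg h2.le (hG x)
    have t4 : 0 ≤ PF C alpha2 w k ω x / x ^ 2 := div_nonneg (hP x) (sq_nonneg _)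
    exact ⟨by linarith, by linarith, by linarith⟩
  -- S nondecreasing
  have hS'formula : ∀ x ∈ Set.Ico r₀ r₁, deriv S x =
      (2 * GF alpha2 ω x / x
        + 2 * zetaF alpha2 ω E x / (muF k ℓ m x ^ 2 * S x ^ 2 * x)) * S x := by
    intro x hx
    have he := (hFE x hx).2.1
    rw [div_eq_iff (hSpos x hx).ne'] at he
    exact he
  have hS'pos : ∀ x ∈ Set.Ico r₀ r₁, 0 ≤ deriv S x := by
    intro x hx
    rw [hS'formula x hx]
    have h3 := hrpos x hx
    apply mul_nonneg (add_nonneg ?_ ?_) (hSpos x hx).le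
    · exact div_nonneg (by linarith [hG x]) h3.le
    · exact div_nonneg (by linarith [hζ x])
        (mul_nonneg (mul_nonneg (sq_nonneg _) (sq_nonneg _)) h3.le)
  have hmono_S : MonotoneOn S (Set.Ico r₀ r₁) := by
    apply monotoneOn_of_deriv_nonneg (convex_Ico _ _) hSreg.continuousOn
    · rw [interior_Ico]; exact fun x hx => (hSd.1 x hx).differentiableWithinAt
    · rw [interior_Ico]; exact fun x hx => hS'pos x (hJI hx)
  -- S bounded via log S - c m antitone
  have hφ : AntitoneOn (fun y => Real.log (S y) - 4 / (δ * r₀) * m y) (Set.Ico r₀ r₁) := by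
    apply antitoneOn_of_deriv_nonpos (convex_Ico _ _)
    · exact (hSreg.continuousOn.log (fun x hx => (hSpos x hx).ne')).sub
        (continuousOn_const.mul hmreg.continuousOn)
    · rw [interior_Ico]
      intro x hx
      exact (((hSd.1 x hx).log (hSpos x (hJI hx)).ne').sub
        ((hmd.1 x hx).const_mul _)).differentiableWithinAt
    · rw [interior_Ico]
      intro x hx
      have hd1 : HasDerivAt (fun y => Real.log (S y) - 4 / (δ * r₀) * m y)
          (deriv S x / S x - 4 / (δ * r₀) * deriv m x) x :=
        (((hSd.1 x hx).hasDerivAt).log (hSpos x (hJI hx)).ne').sub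
          (((hmd.1 x hx).hasDerivAt).const_mul _)
      rw [hd1.deriv]
      have hxI := hJI hx
      have hSx := hSpos x hxI
      have hμx := hμpos x hxI
      have hxp := hrpos x hxI
      obtain ⟨t3, t2, t1⟩ := hterm x hxI
      have hm' := hm'pos x hxI
      have hGx := hG x
      have hζx := hζ x
      -- G ≤ m'/δ and A := ζ/(μ S²) ≤ m'
      have hGm : δ * GF alpha2 ω x ≤ deriv m x := by nlinarith [hμδ x hxI]
      have hA : zetaF alpha2 ω E x / (muF k ℓ m x * S x ^ 2) ≤ deriv m x := t2
      have hA0 : 0 ≤ zetaF alpha2 ω E x / (muF k ℓ m x * S x ^ 2) :=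
        div_nonneg hζx (mul_nonneg hμx.le (sq_nonneg _))
      -- first piece : 2 G / x ≤ 2 m' / (δ r₀)
      have hp1 : 2 * GF alpha2 ω x / x ≤ 2 * deriv m x / (δ * r₀) := by
        rw [div_le_div_iff₀ hxp (by positivity)]
        have hr0x : r₀ ≤ x := hxI.1
        nlinarith [mul_le_mul_of_nonneg_right hGm hxp.le, mul_nonneg hGx (sub_nonneg.2 hr0x)]
      -- second piece
      have heq : 2 * zetaF alpha2 ω E x / (muF k ℓ m x ^ 2 * S x ^ 2 * x)
          = 2 * (zetaF alpha2 ω E x / (muF k ℓ m x * S x ^ 2)) / (muF k ℓ m x * x) := by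
        ring
      have hp2 : 2 * zetaF alpha2 ω E x / (muF k ℓ m x ^ 2 * S x ^ 2 * x)
          ≤ 2 * deriv m x / (δ * r₀) := by
        rw [heq]
        have hden : δ * r₀ ≤ muF k ℓ m x * x :=
          mul_le_mul (hμδ x hxI) hxI.1 hr₀.le hμx.le
        have h1 : 2 * (zetaF alpha2 ω E x / (muF k ℓ m x * S x ^ 2)) / (muF k ℓ m x * x)
            ≤ 2 * (zetaF alpha2 ω E x / (muF k ℓ m x * S x ^ 2)) / (δ * r₀) := by
          apply div_le_div_of_nonneg_left (by linarith) (by positivity) hden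
        refine h1.trans ?_
        exact (div_le_div_iff_of_pos_right (by positivity)).2 (by linarith)
      have hSder := hS'formula x hxI
      rw [hSder]
      have hfinal : (2 * GF alpha2 ω x / x
          + 2 * zetaF alpha2 ω E x / (muF k ℓ m x ^ 2 * S x ^ 2 * x)) * S x / S x
          = 2 * GF alpha2 ω x / x
          + 2 * zetaF alpha2 ω E x / (muF k ℓ m x ^ 2 * S x ^ 2 * x) := by
        rw [mul_div_assoc, div_self hSx.ne', mul_one]
      rw [hfinal]
      have : 4 / (δ * r₀) * deriv m x = 2 * deriv m x / (δ * r₀) + 2 * deriv m x / (δ * r₀) := by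
        ring
      linarith
  have hSmax : ∀ x ∈ Set.Ico r₀ r₁, S x ≤ Real.exp (Real.log (S r₀)
      + 4 / (δ * r₀) * (r₁ * (1 + r₁ ^ 2 / ℓ ^ 2) / 2 - m r₀)) := by
    intro x hx
    have h1 := hφ hr₀I hx hx.1
    simp only at h1
    have h2 := hBm x hx
    have hlog : Real.log (S x) ≤ Real.log (S r₀)
        + 4 / (δ * r₀) * (r₁ * (1 + r₁ ^ 2 / ℓ ^ 2) / 2 - m r₀) := by
      have hc : 0 ≤ 4 / (δ * r₀) := by positivity
      nlinarith
    calc S x = Real.exp (Real.log (S x)) := (Real.exp_log (hSpos x hx)).symm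
      _ ≤ _ := Real.exp_le_exp.2 hlog
  have hS₀le : ∀ x ∈ Set.Ico r₀ r₁, S r₀ ≤ S x := fun x hx => hmono_S hr₀I hx hx.1
  obtain ⟨Slim, hSlim⟩ := monoOn_tendsto hr hmono_S hSmax

  -- ω is bounded, via the monotone sandwich ω ± (x/2 + c·m)
  have hωbound : ∀ i, ∃ Bw, 0 ≤ Bw ∧ ∀ x ∈ Set.Ico r₀ r₁, |ω i x| ≤ Bw := by
    intro i
    have hci0 : 0 < alpha2 i / (2 * δ) := div_pos (halpha i) (by linarith)
    have hkey : ∀ x ∈ Set.Ioo r₀ r₁,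
        deriv (ω i) x ^ 2 / 2 ≤ alpha2 i / (2 * δ) * deriv m x := by
      intro x hx
      have hxI := hJI hx
      obtain ⟨t3, -, -⟩ := hterm x hxI
      have hGi : deriv (ω i) x ^ 2 / alpha2 i ≤ GF alpha2 ω x := by
        unfold GF
        exact Finset.single_le_sum (f := fun j => deriv (ω j) x ^ 2 / alpha2 j)
          (fun j _ => div_nonneg (sq_nonneg _) (halpha j).le) (Finset.mem_univ i)
      have hμx := hμδ x hxI
      have hGx := hG x
      have h1 : δ * (deriv (ω i) x ^ 2 / alpha2 i) ≤ deriv m x := by nlinarith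
      have hα := (halpha i).ne'
      have h2 : deriv (ω i) x ^ 2 / 2
          = alpha2 i / (2 * δ) * (δ * (deriv (ω i) x ^ 2 / alpha2 i)) := by
        field_simp
      rw [h2]
      exact mul_le_mul_of_nonneg_left h1 hci0.le
    have hψm : AntitoneOn (fun y => ω i y - y / 2 - alpha2 i / (2 * δ) * m y)
        (Set.Ico r₀ r₁) := by
      apply antitoneOn_of_deriv_nonpos (convex_Ico _ _)
      · exact (((hωEreg i).1.continuousOn).sub
          ((continuous_id.div_const 2).continuousOn)).sub
          (continuousOn_const.mul hmreg.continuousOn)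
      · rw [interior_Ico]
        intro x hx
        exact ((((hωd i).1 x hx).sub ((differentiable_id.div_const 2) x)).sub
          ((hmd.1 x hx).const_mul _)).differentiableWithinAt
      · rw [interior_Ico]
        intro x hx
        have hd1 : HasDerivAt (fun y => ω i y - y / 2 - alpha2 i / (2 * δ) * m y)
            (deriv (ω i) x - 1 / 2 - alpha2 i / (2 * δ) * deriv m x) x :=
          ((((hωd i).1 x hx).hasDerivAt).sub ((hasDerivAt_id x).div_const 2)).sub
            (((hmd.1 x hx).hasDerivAt).const_mul _)
        rw [hd1.deriv]
        have := hkey x hx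
        nlinarith [sq_nonneg (deriv (ω i) x - 1)]
    have hψp : MonotoneOn (fun y => ω i y + y / 2 + alpha2 i / (2 * δ) * m y)
        (Set.Ico r₀ r₁) := by
      apply monotoneOn_of_deriv_nonneg (convex_Ico _ _)
      · exact (((hωEreg i).1.continuousOn).add
          ((continuous_id.div_const 2).continuousOn)).add
          (continuousOn_const.mul hmreg.continuousOn)
      · rw [interior_Ico]
        intro x hx
        exact ((((hωd i).1 x hx).add ((differentiable_id.div_const 2) x)).add
          ((hmd.1 x hx).const_mul _)).differentiableWithinAt
      · rw [interior_Ico]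
        intro x hx
        have hd1 : HasDerivAt (fun y => ω i y + y / 2 + alpha2 i / (2 * δ) * m y)
            (deriv (ω i) x + 1 / 2 + alpha2 i / (2 * δ) * deriv m x) x :=
          ((((hωd i).1 x hx).hasDerivAt).add ((hasDerivAt_id x).div_const 2)).add
            (((hmd.1 x hx).hasDerivAt).const_mul _)
        rw [hd1.deriv]
        have := hkey x hx
        nlinarith [sq_nonneg (deriv (ω i) x + 1)]
    refine ⟨|ω i r₀| + r₁ + 2 * (alpha2 i / (2 * δ))
      * (|m r₀| + |r₁ * (1 + r₁ ^ 2 / ℓ ^ 2) / 2|), by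
        nlinarith [abs_nonneg (ω i r₀), hr₀.trans hr,
          mul_nonneg hci0.le (add_nonneg (abs_nonneg (m r₀))
            (abs_nonneg (r₁ * (1 + r₁ ^ 2 / ℓ ^ 2) / 2)))], ?_⟩
    intro x hx
    have h1 := hψm hr₀I hx hx.1
    have h2 := hψp hr₀I hx hx.1
    simp only at h1 h2
    have hm1 := hmabs r₀ hr₀I
    have hm2 := hmabs x hx
    have hMm0 : 0 ≤ |m r₀| + |r₁ * (1 + r₁ ^ 2 / ℓ ^ 2) / 2| := by positivity
    have hb1 : alpha2 i / (2 * δ) * m x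
        ≤ alpha2 i / (2 * δ) * (|m r₀| + |r₁ * (1 + r₁ ^ 2 / ℓ ^ 2) / 2|) :=
      mul_le_mul_of_nonneg_left ((le_abs_self _).trans hm2) hci0.le
    have hb2 : -(alpha2 i / (2 * δ) * (|m r₀| + |r₁ * (1 + r₁ ^ 2 / ℓ ^ 2) / 2|))
        ≤ alpha2 i / (2 * δ) * m x := by
      have h := mul_le_mul_of_nonneg_left (abs_le.1 hm2).1 hci0.le
      nlinarith [h]
    have hb3 : alpha2 i / (2 * δ) * m r₀
        ≤ alpha2 i / (2 * δ) * (|m r₀| + |r₁ * (1 + r₁ ^ 2 / ℓ ^ 2) / 2|) :=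
      mul_le_mul_of_nonneg_left ((le_abs_self _).trans hm1) hci0.le
    have hb4 : -(alpha2 i / (2 * δ) * (|m r₀| + |r₁ * (1 + r₁ ^ 2 / ℓ ^ 2) / 2|))
        ≤ alpha2 i / (2 * δ) * m r₀ := by
      have h := mul_le_mul_of_nonneg_left (abs_le.1 hm1).1 hci0.le
      nlinarith [h]
    have hω0 : -|ω i r₀| ≤ ω i r₀ := neg_abs_le _
    have hω0' : ω i r₀ ≤ |ω i r₀| := le_abs_self _
    have hx1 : x < r₁ := hx.2
    have hx0 : r₀ ≤ x := hx.1
    rw [abs_le]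
    constructor <;> linarith
  choose Bω hBω0 hBω using hωbound

  -- === Stage 4 : bounds for E and E' via a Gronwall argument ===
  set Sm : ℝ := Real.exp (Real.log (S r₀)
      + 4 / (δ * r₀) * (r₁ * (1 + r₁ ^ 2 / ℓ ^ 2) / 2 - m r₀)) with hSmdef
  have hSm0 : 0 < Sm := by rw [hSmdef]; exact Real.exp_pos _
  set uu : Fin L → ℝ → ℝ :=
    fun i y => y ^ 2 * derivWithin (E i) (Set.Ico r₀ r₁) y / S y with huudef
  have hdEeq : ∀ i, ∀ x ∈ Set.Ioo r₀ r₁,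
      derivWithin (E i) (Set.Ico r₀ r₁) x = deriv (E i) x := fun i x hx =>
    derivWithin_of_mem_nhds (Filter.mem_of_superset (isOpen_Ioo.mem_nhds hx) hJI)
  have hdEcont : ∀ i, ContinuousOn (derivWithin (E i) (Set.Ico r₀ r₁)) (Set.Ico r₀ r₁) :=
    fun i => (hωEreg i).2.continuousOn_derivWithin (uniqueDiffOn_Ico r₀ r₁) (by norm_num)
  have huucont : ∀ i, ContinuousOn (uu i) (Set.Ico r₀ r₁) := by
    intro i
    apply ContinuousOn.div
    · exact ((continuous_pow 2).continuousOn).mul (hdEcont i)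
    · exact hSreg.continuousOn
    · exact fun x hx => (hSpos x hx).ne'
  -- the derivative of uu
  have huuder : ∀ i, ∀ x ∈ Set.Ioo r₀ r₁,
      HasDerivAt (uu i) (ZF C ω E i x / (muF k ℓ m x * S x)) x := by
    intro i x hx
    have hxI := hJI hx
    have hSx := hSpos x hxI
    have hμx := hμpos x hxI
    have hxp := hrpos x hxI
    have hdd : HasDerivAt (deriv (E i)) (deriv (deriv (E i)) x) x := ((hEd i).2 x hx).hasDerivAt
    have hpow : HasDerivAt (fun y : ℝ => y ^ 2) (2 * x) x := by
      simpa using hasDerivAt_pow 2 x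
    have hnum := hpow.mul hdd
    have hS1 : HasDerivAt S (deriv S x) x := (hSd.1 x hx).hasDerivAt
    have hdiv := hnum.div hS1 hSx.ne'
    have heq : uu i =ᶠ[nhds x] fun y => y ^ 2 * deriv (E i) y / S y := by
      filter_upwards [isOpen_Ioo.mem_nhds hx] with y hy
      simp only [huudef]
      rw [hdEeq i y hy]
    have hE'' := (hFE x hxI).2.2.1 i
    have hS' := hS'formula x hxI
    have hEsolve : deriv (deriv (E i)) x
        = ZF C ω E i x / (muF k ℓ m x * x ^ 2)
          - 2 / x * (1 - GF alpha2 ω x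
            - zetaF alpha2 ω E x / (muF k ℓ m x ^ 2 * S x ^ 2)) * deriv (E i) x := by
      linarith
    have hval : ZF C ω E i x / (muF k ℓ m x * S x)
        = ((2 * x * deriv (E i) x + x ^ 2 * deriv (deriv (E i)) x) * S x
            - x ^ 2 * deriv (E i) x * deriv S x) / S x ^ 2 := by
      rw [hS', hEsolve]
      field_simp
      ring
    rw [hval]
    exact hdiv.congr_of_eventuallyEq heq
  -- E' in terms of uu
  have hE'uu : ∀ i, ∀ x ∈ Set.Ioo r₀ r₁,
      deriv (E i) x = uu i x * S x / x ^ 2 := by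
    intro i x hx
    have hSx := (hSpos x (hJI hx)).ne'
    have hxp := (hrpos x (hJI hx)).ne'
    simp only [huudef]
    rw [hdEeq i x hx]
    field_simp
  -- the Gronwall function
  set WW : ℝ → ℝ := fun y => ∑ j, ((E j y) ^ 2 + (uu j y) ^ 2) with hWWdef
  have hWW0 : ∀ x, 0 ≤ WW x := fun x =>
    Finset.sum_nonneg fun j _ => add_nonneg (sq_nonneg _) (sq_nonneg _)
  have hWWE : ∀ j x, (E j x) ^ 2 ≤ WW x := by
    intro j x
    calc (E j x) ^ 2 ≤ (E j x) ^ 2 + (uu j x) ^ 2 := by nlinarith [sq_nonneg (uu j x)]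
      _ ≤ WW x := Finset.single_le_sum (f := fun l => (E l x) ^ 2 + (uu l x) ^ 2)
          (fun l _ => add_nonneg (sq_nonneg _) (sq_nonneg _)) (Finset.mem_univ j)
  have hWWu : ∀ j x, (uu j x) ^ 2 ≤ WW x := by
    intro j x
    calc (uu j x) ^ 2 ≤ (E j x) ^ 2 + (uu j x) ^ 2 := by nlinarith [sq_nonneg (E j x)]
      _ ≤ WW x := Finset.single_le_sum (f := fun l => (E l x) ^ 2 + (uu l x) ^ 2)
          (fun l _ => add_nonneg (sq_nonneg _) (sq_nonneg _)) (Finset.mem_univ j)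
  have hWWcont : ContinuousOn WW (Set.Ico r₀ r₁) := by
    rw [hWWdef]
    apply continuousOn_finset_sum
    intro j _
    exact ((hωEreg j).2.continuousOn.pow 2).add ((huucont j).pow 2)
  have hWWder : ∀ x ∈ Set.Ioo r₀ r₁, HasDerivAt WW
      (∑ j, (2 * E j x * deriv (E j) x
        + 2 * uu j x * (ZF C ω E j x / (muF k ℓ m x * S x)))) x := by
    intro x hx
    rw [hWWdef]
    apply HasDerivAt.fun_sum
    intro j _
    have h1 : HasDerivAt (fun y => (E j y) ^ 2) (2 * E j x * deriv (E j) x) x := by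
      have := (((hEd j).1 x hx).hasDerivAt).fun_pow 2
      simpa [mul_comm, mul_assoc, mul_left_comm] using this
    have h2 : HasDerivAt (fun y => (uu j y) ^ 2)
        (2 * uu j x * (ZF C ω E j x / (muF k ℓ m x * S x))) x := by
      have := (huuder j x hx).fun_pow 2
      simpa [mul_comm, mul_assoc, mul_left_comm] using this
    exact h1.add h2
  -- constant for the Gronwall bound
  set AA : Fin L → ℝ := fun j => ∑ l, |C j l| * (Bω l) ^ 2 with hAAdef
  have hAA0 : ∀ j, 0 ≤ AA j := fun j =>
    Finset.sum_nonneg fun l _ => mul_nonneg (abs_nonneg _) (sq_nonneg _)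
  set KK : ℝ := Sm / r₀ ^ 2 + (1 + ∑ j, (AA j) ^ 2) / (δ * S r₀) with hKKdef
  have hKK0 : 0 < KK := by
    rw [hKKdef]
    have h1 : 0 < Sm / r₀ ^ 2 := by positivity
    have h2 : 0 ≤ ∑ j, (AA j) ^ 2 := Finset.sum_nonneg fun j _ => sq_nonneg _
    have h3 : 0 < (1 + ∑ j, (AA j) ^ 2) / (δ * S r₀) := by
      apply div_pos (by linarith) (by positivity)
    linarith
  -- Z bound
  have hZb : ∀ j, ∀ x ∈ Set.Ico r₀ r₁,
      |ZF C ω E j x| ≤ AA j * Real.sqrt (1 + WW x) := by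
    intro j x hx
    have hsq : 0 ≤ 1 + WW x := by linarith [hWW0 x]
    have hE1 : ∀ l, |E l x| ≤ Real.sqrt (1 + WW x) := by
      intro l
      rw [show |E l x| = Real.sqrt ((E l x) ^ 2) from (Real.sqrt_sq_eq_abs _).symm]
      apply Real.sqrt_le_sqrt
      linarith [hWWE l x]
    unfold ZF
    calc |∑ l, C j l * E l x * (ω l x) ^ 2| ≤ ∑ l, |C j l * E l x * (ω l x) ^ 2| :=
        Finset.abs_sum_le_sum_abs _ _
      _ ≤ ∑ l, |C j l| * (Bω l) ^ 2 * Real.sqrt (1 + WW x) := by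
        apply Finset.sum_le_sum
        intro l _
        rw [abs_mul, abs_mul]
        have hω2 : |(ω l x) ^ 2| ≤ (Bω l) ^ 2 := by
          rw [abs_pow]
          exact pow_le_pow_left₀ (abs_nonneg _) (hBω l x hx) 2
        have h0C := abs_nonneg (C j l)
        calc |C j l| * |E l x| * |(ω l x) ^ 2|
            = |C j l| * (|E l x| * |(ω l x) ^ 2|) := by ring
          _ ≤ |C j l| * (Real.sqrt (1 + WW x) * (Bω l) ^ 2) :=
              mul_le_mul_of_nonneg_left
                (mul_le_mul (hE1 l) hω2 (abs_nonneg _) (Real.sqrt_nonneg _)) h0C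
          _ = |C j l| * (Bω l) ^ 2 * Real.sqrt (1 + WW x) := by ring
      _ = AA j * Real.sqrt (1 + WW x) := by rw [hAAdef, Finset.sum_mul]
  -- derivative bound : W' ≤ KK * (1 + W)
  have hWWgrow : ∀ x ∈ Set.Ioo r₀ r₁,
      (∑ j, (2 * E j x * deriv (E j) x
        + 2 * uu j x * (ZF C ω E j x / (muF k ℓ m x * S x)))) ≤ KK * (1 + WW x) := by
    intro x hx
    have hxI := hJI hx
    have hSx := hSpos x hxI
    have hμx := hμpos x hxI
    have hxp := hrpos x hxI
    have hsq : 0 ≤ 1 + WW x := by linarith [hWW0 x]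
    have hterm : ∀ j, 2 * E j x * deriv (E j) x
        + 2 * uu j x * (ZF C ω E j x / (muF k ℓ m x * S x))
        ≤ (Sm / r₀ ^ 2) * ((E j x) ^ 2 + (uu j x) ^ 2)
          + (1 / (δ * S r₀)) * ((E j x) ^ 2 + (uu j x) ^ 2)
          + (1 / (δ * S r₀)) * (AA j) ^ 2 * (1 + WW x) := by
      intro j
      -- part 1
      have hEder := hE'uu j x hx
      have hSleSm : S x ≤ Sm := hSmax x hxI
      have hxr0 : r₀ ≤ x := hxI.1
      have hfrac : S x / x ^ 2 ≤ Sm / r₀ ^ 2 := by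
        apply div_le_div₀ hSm0.le hSleSm (by positivity)
        exact pow_le_pow_left₀ hr₀.le hxr0 2
      have hfrac0 : 0 ≤ S x / x ^ 2 := by positivity
      have habs1 : 2 * E j x * uu j x ≤ (E j x) ^ 2 + (uu j x) ^ 2 := by
        nlinarith [sq_nonneg (E j x - uu j x)]
      have habs1' : -((E j x) ^ 2 + (uu j x) ^ 2) ≤ 2 * E j x * uu j x := by
        nlinarith [sq_nonneg (E j x + uu j x)]
      have hp1 : 2 * E j x * deriv (E j) x ≤ (Sm / r₀ ^ 2) * ((E j x) ^ 2 + (uu j x) ^ 2) := by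
        rw [hEder]
        have h1 : 2 * E j x * (uu j x * S x / x ^ 2)
            = (2 * E j x * uu j x) * (S x / x ^ 2) := by ring
        rw [h1]
        have hsum0 : 0 ≤ (E j x) ^ 2 + (uu j x) ^ 2 := by positivity
        calc (2 * E j x * uu j x) * (S x / x ^ 2)
            ≤ ((E j x) ^ 2 + (uu j x) ^ 2) * (S x / x ^ 2) :=
              mul_le_mul_of_nonneg_right habs1 hfrac0
          _ ≤ ((E j x) ^ 2 + (uu j x) ^ 2) * (Sm / r₀ ^ 2) :=
              mul_le_mul_of_nonneg_left hfrac hsum0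
          _ = (Sm / r₀ ^ 2) * ((E j x) ^ 2 + (uu j x) ^ 2) := by ring
      -- part 2
      have hZ := hZb j x hxI
      have hZsq : (ZF C ω E j x) ^ 2 ≤ (AA j) ^ 2 * (1 + WW x) := by
        have h0 : 0 ≤ AA j * Real.sqrt (1 + WW x) :=
          mul_nonneg (hAA0 j) (Real.sqrt_nonneg _)
        have h1 : (ZF C ω E j x) ^ 2 ≤ (AA j * Real.sqrt (1 + WW x)) ^ 2 := by
          rw [← sq_abs (ZF C ω E j x)]
          exact pow_le_pow_left₀ (abs_nonneg _) hZ 2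
        have h2 : (AA j * Real.sqrt (1 + WW x)) ^ 2 = (AA j) ^ 2 * (1 + WW x) := by
          rw [mul_pow, Real.sq_sqrt hsq]
        linarith
      have hden : δ * S r₀ ≤ muF k ℓ m x * S x :=
        mul_le_mul (hμδ x hxI) (hS₀le x hxI) hS₀.le hμx.le
      have hden0 : 0 < δ * S r₀ := by positivity
      have habs2 : 2 * uu j x * ZF C ω E j x ≤ (uu j x) ^ 2 + (ZF C ω E j x) ^ 2 := by
        nlinarith [sq_nonneg (uu j x - ZF C ω E j x)]
      have hnum0 : 0 ≤ (uu j x) ^ 2 + (ZF C ω E j x) ^ 2 := by positivity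
      have hp2 : 2 * uu j x * (ZF C ω E j x / (muF k ℓ m x * S x))
          ≤ ((uu j x) ^ 2 + (ZF C ω E j x) ^ 2) / (δ * S r₀) := by
        have hμS0 : 0 < muF k ℓ m x * S x := by positivity
        have h1 : 2 * uu j x * (ZF C ω E j x / (muF k ℓ m x * S x))
            = (2 * uu j x * ZF C ω E j x) / (muF k ℓ m x * S x) := by ring
        rw [h1]
        calc (2 * uu j x * ZF C ω E j x) / (muF k ℓ m x * S x)
            ≤ ((uu j x) ^ 2 + (ZF C ω E j x) ^ 2) / (muF k ℓ m x * S x) :=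
              (div_le_div_iff_of_pos_right hμS0).2 habs2
          _ ≤ ((uu j x) ^ 2 + (ZF C ω E j x) ^ 2) / (δ * S r₀) :=
              div_le_div_of_nonneg_left hnum0 hden0 hden
      have hp2' : ((uu j x) ^ 2 + (ZF C ω E j x) ^ 2) / (δ * S r₀)
          ≤ (1 / (δ * S r₀)) * ((E j x) ^ 2 + (uu j x) ^ 2)
            + (1 / (δ * S r₀)) * (AA j) ^ 2 * (1 + WW x) := by
        rw [div_eq_mul_one_div _ (δ * S r₀), mul_comm]
        have hcoef : 0 ≤ 1 / (δ * S r₀) := by positivity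
        have hE2 : 0 ≤ (E j x) ^ 2 := sq_nonneg _
        have hmono : (uu j x) ^ 2 + (ZF C ω E j x) ^ 2
            ≤ ((E j x) ^ 2 + (uu j x) ^ 2) + (AA j) ^ 2 * (1 + WW x) := by
          linarith
        calc 1 / (δ * S r₀) * ((uu j x) ^ 2 + (ZF C ω E j x) ^ 2)
            ≤ 1 / (δ * S r₀) * (((E j x) ^ 2 + (uu j x) ^ 2) + (AA j) ^ 2 * (1 + WW x)) :=
              mul_le_mul_of_nonneg_left hmono hcoef
          _ = (1 / (δ * S r₀)) * ((E j x) ^ 2 + (uu j x) ^ 2)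
              + (1 / (δ * S r₀)) * (AA j) ^ 2 * (1 + WW x) := by ring
      linarith
    calc (∑ j, (2 * E j x * deriv (E j) x
        + 2 * uu j x * (ZF C ω E j x / (muF k ℓ m x * S x))))
        ≤ ∑ j, ((Sm / r₀ ^ 2) * ((E j x) ^ 2 + (uu j x) ^ 2)
          + (1 / (δ * S r₀)) * ((E j x) ^ 2 + (uu j x) ^ 2)
          + (1 / (δ * S r₀)) * (AA j) ^ 2 * (1 + WW x)) :=
          Finset.sum_le_sum fun j _ => hterm j
      _ = (Sm / r₀ ^ 2 + 1 / (δ * S r₀)) * WW x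
          + (1 / (δ * S r₀)) * (∑ j, (AA j) ^ 2) * (1 + WW x) := by
          rw [hWWdef]
          simp only [Finset.sum_add_distrib, ← Finset.mul_sum, ← Finset.sum_mul]
          ring
      _ ≤ KK * (1 + WW x) := by
          rw [hKKdef]
          have h1 : (Sm / r₀ ^ 2 + 1 / (δ * S r₀)) * WW x
              ≤ (Sm / r₀ ^ 2 + 1 / (δ * S r₀)) * (1 + WW x) := by
            apply mul_le_mul_of_nonneg_left (by linarith [hWW0 x]) (by positivity)
          have h2 : (1 / (δ * S r₀)) * (∑ j, (AA j) ^ 2) * (1 + WW x)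
              ≤ (∑ j, (AA j) ^ 2) / (δ * S r₀) * (1 + WW x) := by
            apply le_of_eq
            ring
          have h3 : 0 ≤ ∑ j, (AA j) ^ 2 := Finset.sum_nonneg fun j _ => sq_nonneg _
          have hexp : (Sm / r₀ ^ 2 + (1 + ∑ j, (AA j) ^ 2) / (δ * S r₀)) * (1 + WW x)
              = (Sm / r₀ ^ 2 + 1 / (δ * S r₀)) * (1 + WW x)
                + (∑ j, (AA j) ^ 2) / (δ * S r₀) * (1 + WW x) := by
            ring
          rw [hexp]
          linarith
  -- Gronwall conclusion
  have hQ : AntitoneOn (fun y => Real.log (1 + WW y) - KK * y) (Set.Ico r₀ r₁) := by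
    have hKc : ContinuousOn (fun y : ℝ => KK * y) (Set.Ico r₀ r₁) :=
      (continuous_const.mul continuous_id).continuousOn
    apply antitoneOn_of_deriv_nonpos (convex_Ico _ _)
    · exact (ContinuousOn.log (continuousOn_const.add hWWcont)
        (fun x hx => ne_of_gt (by show (0:ℝ) < 1 + WW x; linarith [hWW0 x]))).sub hKc
    · rw [interior_Ico]
      intro x hx
      have h1 : HasDerivAt (fun y => 1 + WW y)
          (∑ j, (2 * E j x * deriv (E j) x
            + 2 * uu j x * (ZF C ω E j x / (muF k ℓ m x * S x)))) x :=
        (hWWder x hx).const_add 1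
      have hpos : (0:ℝ) < 1 + WW x := by linarith [hWW0 x]
      have h2 : HasDerivAt (fun y => Real.log (1 + WW y) - KK * y)
          ((∑ j, (2 * E j x * deriv (E j) x
            + 2 * uu j x * (ZF C ω E j x / (muF k ℓ m x * S x)))) / (1 + WW x) - KK * 1) x :=
        (h1.log hpos.ne').sub ((hasDerivAt_id x).const_mul KK)
      exact h2.differentiableAt.differentiableWithinAt
    · rw [interior_Ico]
      intro x hx
      have h1 : HasDerivAt (fun y => 1 + WW y)
          (∑ j, (2 * E j x * deriv (E j) x
            + 2 * uu j x * (ZF C ω E j x / (muF k ℓ m x * S x)))) x :=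
        (hWWder x hx).const_add 1
      have hpos : (0:ℝ) < 1 + WW x := by linarith [hWW0 x]
      have h2 : HasDerivAt (fun y => Real.log (1 + WW y) - KK * y)
          ((∑ j, (2 * E j x * deriv (E j) x
            + 2 * uu j x * (ZF C ω E j x / (muF k ℓ m x * S x)))) / (1 + WW x) - KK * 1) x :=
        (h1.log hpos.ne').sub ((hasDerivAt_id x).const_mul KK)
      rw [h2.deriv]
      have h3 := hWWgrow x hx
      rw [sub_nonpos, div_le_iff₀ hpos]
      calc (∑ j, (2 * E j x * deriv (E j) x
          + 2 * uu j x * (ZF C ω E j x / (muF k ℓ m x * S x))))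
          ≤ KK * (1 + WW x) := h3
        _ = KK * 1 * (1 + WW x) := by ring
  have hWWbdd : ∀ x ∈ Set.Ico r₀ r₁,
      WW x ≤ Real.exp (Real.log (1 + WW r₀) + KK * (r₁ - r₀)) := by
    intro x hx
    have h1 := hQ hr₀I hx hx.1
    simp only at h1
    have hpos : (0:ℝ) < 1 + WW x := by linarith [hWW0 x]
    have hlog : Real.log (1 + WW x) ≤ Real.log (1 + WW r₀) + KK * (r₁ - r₀) := by
      have hK1 : KK * x ≤ KK * r₁ := mul_le_mul_of_nonneg_left hx.2.le hKK0.le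
      nlinarith [hKK0]
    have := Real.exp_le_exp.2 hlog
    rw [Real.exp_log hpos] at this
    linarith
  set BW : ℝ := Real.exp (Real.log (1 + WW r₀) + KK * (r₁ - r₀)) with hBWdef
  have hBW0 : 0 < BW := by rw [hBWdef]; exact Real.exp_pos _
  have hEbdd : ∀ j, ∀ x ∈ Set.Ico r₀ r₁, |E j x| ≤ Real.sqrt BW := by
    intro j x hx
    rw [show |E j x| = Real.sqrt ((E j x) ^ 2) from (Real.sqrt_sq_eq_abs _).symm]
    apply Real.sqrt_le_sqrt
    linarith [hWWE j x, hWWbdd x hx]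
  have huubdd : ∀ j, ∀ x ∈ Set.Ico r₀ r₁, |uu j x| ≤ Real.sqrt BW := by
    intro j x hx
    rw [show |uu j x| = Real.sqrt ((uu j x) ^ 2) from (Real.sqrt_sq_eq_abs _).symm]
    apply Real.sqrt_le_sqrt
    linarith [hWWu j x, hWWbdd x hx]
  have hE'bdd : ∀ j, ∀ x ∈ Set.Ioo r₀ r₁,
      |deriv (E j) x| ≤ Real.sqrt BW * Sm / r₀ ^ 2 := by
    intro j x hx
    have hxI := hJI hx
    rw [hE'uu j x hx, abs_div, abs_mul]
    have hS1 : |S x| = S x := abs_of_pos (hSpos x hxI)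
    have hx2 : |x ^ 2| = x ^ 2 := abs_of_pos (pow_pos (hrpos x hxI) 2)
    rw [hS1, hx2]
    have h1 := huubdd j x hxI
    have hS2 : S x ≤ Sm := hSmax x hxI
    have hnum : |uu j x| * S x ≤ Real.sqrt BW * Sm :=
      mul_le_mul h1 hS2 (hSpos x hxI).le (Real.sqrt_nonneg _)
    have hden : r₀ ^ 2 ≤ x ^ 2 := pow_le_pow_left₀ hr₀.le hxI.1 2
    calc |uu j x| * S x / x ^ 2
        ≤ |uu j x| * S x / r₀ ^ 2 := div_le_div_of_nonneg_left
          (mul_nonneg (abs_nonneg _) (hSpos x hxI).le) (by positivity) hden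
      _ ≤ Real.sqrt BW * Sm / r₀ ^ 2 := (div_le_div_iff_of_pos_right (by positivity)).2 hnum

  -- === Stage 5 : bound for ω' via vv = μ S ω' ===
  have hdωeq : ∀ i, ∀ x ∈ Set.Ioo r₀ r₁,
      derivWithin (ω i) (Set.Ico r₀ r₁) x = deriv (ω i) x := fun i x hx =>
    derivWithin_of_mem_nhds (Filter.mem_of_superset (isOpen_Ioo.mem_nhds hx) hJI)
  have hdωcont : ∀ i, ContinuousOn (derivWithin (ω i) (Set.Ico r₀ r₁)) (Set.Ico r₀ r₁) :=
    fun i => (hωEreg i).1.continuousOn_derivWithin (uniqueDiffOn_Ico r₀ r₁) (by norm_num)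
  set vv : Fin L → ℝ → ℝ :=
    fun i y => muF k ℓ m y * S y * derivWithin (ω i) (Set.Ico r₀ r₁) y with hvvdef
  have hμcont : ContinuousOn (muF k ℓ m) (Set.Ico r₀ r₁) := by
    show ContinuousOn (fun y => k - 2 * m y / y + y ^ 2 / ℓ ^ 2) (Set.Ico r₀ r₁)
    apply ContinuousOn.add
    · apply ContinuousOn.sub continuousOn_const
      exact (continuousOn_const.mul hmreg.continuousOn).div continuousOn_id
        (fun x hx => (hrpos x hx).ne')
    · exact (continuous_pow 2).continuousOn.div_const _
  have hvvcont : ∀ i, ContinuousOn (vv i) (Set.Ico r₀ r₁) :=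
    fun i => (hμcont.mul hSreg.continuousOn).mul (hdωcont i)
  have hvvder : ∀ i, ∀ x ∈ Set.Ioo r₀ r₁,
      HasDerivAt (vv i)
        (-(E i x) ^ 2 * ω i x / (muF k ℓ m x * S x) - S x * FF C w k ω i x / x ^ 2) x := by
    intro i x hx
    have hxI := hJI hx
    have hSx := hSpos x hxI
    have hμx := hμpos x hxI
    have hxp := hrpos x hxI
    have hm1 : HasDerivAt m (deriv m x) x := (hmd.1 x hx).hasDerivAt
    have hS1 : HasDerivAt S (deriv S x) x := (hSd.1 x hx).hasDerivAt
    have hω2 : HasDerivAt (deriv (ω i)) (deriv (deriv (ω i)) x) x := ((hωd i).2 x hx).hasDerivAt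
    have h2 : HasDerivAt (fun y => 2 * m y / y)
        ((2 * deriv m x * x - 2 * m x * 1) / x ^ 2) x :=
      (hm1.const_mul 2).div (hasDerivAt_id x) hxp.ne'
    have h3 : HasDerivAt (fun y : ℝ => y ^ 2 / ℓ ^ 2) (2 * x / ℓ ^ 2) x := by
      simpa using (hasDerivAt_pow 2 x).div_const (ℓ ^ 2)
    have hμder : HasDerivAt (muF k ℓ m)
        (-((2 * deriv m x * x - 2 * m x * 1) / x ^ 2) + 2 * x / ℓ ^ 2) x := by
      have h4 := (h2.const_sub k).add h3
      exact h4.congr_of_eventuallyEq (Filter.Eventually.of_forall (fun y => rfl))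
    have hprod := (hμder.mul hS1).mul hω2
    have heqf : vv i =ᶠ[nhds x] fun y => muF k ℓ m y * S y * deriv (ω i) y := by
      filter_upwards [isOpen_Ioo.mem_nhds hx] with y hy
      simp only [hvvdef]
      rw [hdωeq i y hy]
    have hder : HasDerivAt (vv i)
        (((-((2 * deriv m x * x - 2 * m x * 1) / x ^ 2) + 2 * x / ℓ ^ 2) * S x
            + muF k ℓ m x * deriv S x) * deriv (ω i) x
          + muF k ℓ m x * S x * deriv (deriv (ω i)) x) x :=
      hprod.congr_of_eventuallyEq heqf
    have hm' := (hFE x hxI).1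
    have hS' := hS'formula x hxI
    have hωeq := (hFE x hxI).2.2.2 i
    have hx2μ : x ^ 2 * muF k ℓ m x ≠ 0 := by positivity
    have hωsolve : deriv (deriv (ω i)) x =
        (-(2 * (m x - PF C alpha2 w k ω x / x - x ^ 3 * etaF C alpha2 E x / S x ^ 2
            + x ^ 3 / ℓ ^ 2) * deriv (ω i) x)
          - x ^ 2 * (E i x) ^ 2 * ω i x / (muF k ℓ m x * S x ^ 2) - FF C w k ω i x)
        / (x ^ 2 * muF k ℓ m x) := by
      rw [eq_div_iff hx2μ]
      linear_combination hωeq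
    have hval : -(E i x) ^ 2 * ω i x / (muF k ℓ m x * S x) - S x * FF C w k ω i x / x ^ 2
        = ((-((2 * deriv m x * x - 2 * m x * 1) / x ^ 2) + 2 * x / ℓ ^ 2) * S x
            + muF k ℓ m x * deriv S x) * deriv (ω i) x
          + muF k ℓ m x * S x * deriv (deriv (ω i)) x := by
      rw [hωsolve, hS', hm']
      field_simp
      ring
    rw [hval]
    exact hder
  -- bound on FF
  have hFFb : ∀ i, ∀ x ∈ Set.Ico r₀ r₁,
      |FF C w k ω i x| ≤ Bω i / 2 * ∑ j, |C i j| * (w j + (Bω j) ^ 2) := by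
    intro i x hx
    unfold FF
    rw [abs_mul]
    have h1 : |ω i x / 2| ≤ Bω i / 2 := by
      rw [abs_div, abs_of_pos (show (0:ℝ) < 2 by norm_num)]
      exact div_le_div_of_nonneg_right (hBω i x hx) (by norm_num)
    have h2 : |∑ j, C i j * (k * w j - ω j x ^ 2)| ≤ ∑ j, |C i j| * (w j + (Bω j) ^ 2) := by
      refine (Finset.abs_sum_le_sum_abs _ _).trans (Finset.sum_le_sum ?_)
      intro j _
      rw [abs_mul]
      apply mul_le_mul_of_nonneg_left ?_ (abs_nonneg _)
      have h3 : |k * w j - ω j x ^ 2| ≤ |k * w j| + |ω j x ^ 2| := abs_sub _ _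
      have h4 : |k * w j| = |k| * w j := by rw [abs_mul, abs_of_pos (hw j)]
      have h5 : |ω j x ^ 2| ≤ (Bω j) ^ 2 := by
        rw [abs_pow]
        exact pow_le_pow_left₀ (abs_nonneg _) (hBω j x hx) 2
      have h6 : |k| * w j ≤ w j := by nlinarith [hw j, hkabs, abs_nonneg k]
      linarith
    have hsum0 : (0:ℝ) ≤ ∑ j, |C i j| * (w j + (Bω j) ^ 2) :=
      Finset.sum_nonneg fun j _ => mul_nonneg (abs_nonneg _)
        (by nlinarith [hw j, sq_nonneg (Bω j)])
    exact mul_le_mul h1 h2 (abs_nonneg _) (by linarith [hBω0 i])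
  -- pointwise bound on ω'
  have hω'bound : ∀ i, ∃ Bv, 0 ≤ Bv ∧ ∀ x ∈ Set.Ioo r₀ r₁, |deriv (ω i) x| ≤ Bv := by
    intro i
    have hBFi0 : 0 ≤ Bω i / 2 * ∑ j, |C i j| * (w j + (Bω j) ^ 2) :=
      mul_nonneg (by linarith [hBω0 i]) (Finset.sum_nonneg fun j _ =>
        mul_nonneg (abs_nonneg _) (by nlinarith [hw j, sq_nonneg (Bω j)]))
    have hBd0 : 0 ≤ BW * Bω i / (δ * S r₀)
        + Sm * (Bω i / 2 * ∑ j, |C i j| * (w j + (Bω j) ^ 2)) / r₀ ^ 2 :=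
      add_nonneg (div_nonneg (mul_nonneg hBW0.le (hBω0 i)) (by positivity))
        (div_nonneg (mul_nonneg hSm0.le hBFi0) (by positivity))
    have hdbound : ∀ x ∈ Set.Ioo r₀ r₁, |deriv (vv i) x| ≤ BW * Bω i / (δ * S r₀)
        + Sm * (Bω i / 2 * ∑ j, |C i j| * (w j + (Bω j) ^ 2)) / r₀ ^ 2 := by
      intro x hx
      rw [(hvvder i x hx).deriv]
      have hxI := hJI hx
      have hμx := hμpos x hxI
      have hSx := hSpos x hxI
      have hE2 : (E i x) ^ 2 ≤ BW := by
        have := hWWE i x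
        have := hWWbdd x hxI
        linarith
      have ht1 : |(E i x) ^ 2 * ω i x / (muF k ℓ m x * S x)| ≤ BW * Bω i / (δ * S r₀) := by
        apply abs_div_le_of_bounds ?_ (by positivity)
          (mul_le_mul (hμδ x hxI) (hS₀le x hxI) hS₀.le hμx.le)
        rw [abs_mul, abs_of_nonneg (sq_nonneg (E i x))]
        exact mul_le_mul hE2 (hBω i x hxI) (abs_nonneg _) hBW0.le
      have ht2 : |S x * FF C w k ω i x / x ^ 2|
          ≤ Sm * (Bω i / 2 * ∑ j, |C i j| * (w j + (Bω j) ^ 2)) / r₀ ^ 2 := by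
        apply abs_div_le_of_bounds ?_ (by positivity) (pow_le_pow_left₀ hr₀.le hxI.1 2)
        rw [abs_mul, abs_of_pos hSx]
        exact mul_le_mul (hSmax x hxI) (hFFb i x hxI) (abs_nonneg _) hSm0.le
      have h0 : -(E i x) ^ 2 * ω i x / (muF k ℓ m x * S x) - S x * FF C w k ω i x / x ^ 2
          = -((E i x) ^ 2 * ω i x / (muF k ℓ m x * S x) + S x * FF C w k ω i x / x ^ 2) := by
        ring
      rw [h0, abs_neg]
      exact (abs_add_le _ _).trans (by linarith)
    obtain ⟨hvb, -⟩ := bound_of_deriv_bound hr (hvvcont i)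
      (fun x hx => (hvvder i x hx).differentiableAt) hdbound
    refine ⟨(|vv i r₀| + (BW * Bω i / (δ * S r₀)
      + Sm * (Bω i / 2 * ∑ j, |C i j| * (w j + (Bω j) ^ 2)) / r₀ ^ 2) * (r₁ - r₀))
      / (δ * S r₀), ?_, ?_⟩
    · apply div_nonneg ?_ (by positivity)
      have : 0 ≤ r₁ - r₀ := by linarith
      have := abs_nonneg (vv i r₀)
      nlinarith
    intro x hx
    have hxI := hJI hx
    have hveq : vv i x = muF k ℓ m x * S x * deriv (ω i) x := by
      simp only [hvvdef]
      rw [hdωeq i x hx]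
    have hvbx := hvb x hxI
    rw [hveq, abs_mul, abs_mul, abs_of_pos (hμpos x hxI), abs_of_pos (hSpos x hxI)] at hvbx
    rw [le_div_iff₀ (by positivity)]
    have hstep : δ * S r₀ * |deriv (ω i) x|
        ≤ muF k ℓ m x * S x * |deriv (ω i) x| :=
      mul_le_mul_of_nonneg_right
        (mul_le_mul (hμδ x hxI) (hS₀le x hxI) hS₀.le (hμpos x hxI).le) (abs_nonneg _)
    linarith
  -- === Stage 6 : limits and assembly ===
  have hωlim : ∀ i, ∃ l, Filter.Tendsto (ω i) (nhdsWithin r₁ (Set.Iio r₁)) (nhds l) := by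
    intro i
    obtain ⟨Bv, hBv0, hBv⟩ := hω'bound i
    exact (bound_of_deriv_bound hr (hωEreg i).1.continuousOn
      (fun x hx => (hωd i).1 x hx) hBv).2
  have hElim : ∀ i, ∃ l, Filter.Tendsto (E i) (nhdsWithin r₁ (Set.Iio r₁)) (nhds l) := by
    intro i
    exact (bound_of_deriv_bound hr (hωEreg i).2.continuousOn
      (fun x hx => (hEd i).1 x hx) (hE'bdd i)).2
  refine ⟨hmono_m, ⟨|m r₀| + |r₁ * (1 + r₁ ^ 2 / ℓ ^ 2) / 2|, hmabs⟩, hmono_S,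
    ⟨Sm, fun x hx => by rw [abs_of_pos (hSpos x hx)]; exact hSmax x hx⟩, ?_,
    ⟨mlim, Slim, hmlim, hSlim⟩, fun i => ?_⟩
  · intro i
    obtain ⟨Bv, hBv0, hBv⟩ := hω'bound i
    refine ⟨Bω i + Bv + |deriv (ω i) r₀| + Real.sqrt BW
      + Real.sqrt BW * Sm / r₀ ^ 2 + |deriv (E i) r₀|, ?_⟩
    intro x hx
    have n1 : 0 ≤ Bω i := hBω0 i
    have n2 : 0 ≤ |deriv (ω i) r₀| := abs_nonneg _
    have n3 : 0 ≤ Real.sqrt BW := Real.sqrt_nonneg _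
    have n4 : 0 ≤ Real.sqrt BW * Sm / r₀ ^ 2 :=
      div_nonneg (mul_nonneg n3 hSm0.le) (by positivity)
    have n5 : 0 ≤ |deriv (E i) r₀| := abs_nonneg _
    have b1 := hBω i x hx
    have b3 := hEbdd i x hx
    rcases eq_or_lt_of_le hx.1 with heq|hlt
    · subst heq
      exact ⟨by linarith, by linarith, by linarith, by linarith⟩
    · have hxJ : x ∈ Set.Ioo r₀ r₁ := ⟨hlt, hx.2⟩
      have b2 := hBv x hxJ
      have b4 := hE'bdd i x hxJ
      exact ⟨by linarith, by linarith, by linarith, by linarith⟩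
  · obtain ⟨ol, hol⟩ := hωlim i
    obtain ⟨el, hel⟩ := hElim i
    exact ⟨ol, el, hol, hel⟩
end
end

section
/- For any constant M ∈ ℝ, the configuration ω_i(r) ≡ 0, E_i(r) ≡ 0, S(r) ≡ 1, m(r) = M − Q²/(2r), where Q² = (k²/4) Σ_{i,j} w_i h_{ij} w_j ≥ 0, satisfies the field equations on any interval of r > 0 on which μ(r) = k − 2M/r + Q²/r² + r²/ℓ² > 0. This is the embedded Reissner–Nordström–anti-de Sitter solution; it exists only with this value of Q², and for k = 0 it necessarily has zero magnetic charge. -/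
noncomputable section

open Filter Asymptotics

lemma deriv_m_aux (M c r : ℝ) (hr : r ≠ 0) :
    deriv (fun r => M - c / (2 * r)) r = c / (2 * r ^ 2) := by
  have h1 : HasDerivAt (fun r : ℝ => M - c / (2 * r)) (c / (2 * r ^ 2)) r := by
    have h : HasDerivAt (fun r : ℝ => r⁻¹) (-(r ^ 2)⁻¹) r := hasDerivAt_inv hr
    have h2 := ((h.const_mul (c / 2)).const_sub M)
    have h3 : (fun r : ℝ => M - c / (2 * r)) = fun x => M - c / 2 * x⁻¹ := by
      funext x; simp [div_eq_mul_inv, mul_inv]; ring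
    rw [h3]
    exact h2.congr_deriv (by ring)
  exact h1.deriv

/-- the embedded Reissner–Nördstrom–anti-de Sitter solution:
`ωᵢ ≡ 0`, `Eᵢ ≡ 0`, `S ≡ 1`, `m(r) = M − Q²/(2r)` with
`Q² = (k²/4) Σᵢⱼ wᵢ hᵢⱼ wⱼ ≥ 0` solves the field equations wherever `r > 0` and `μ > 0`;
it exists only with this value of `Q²`, and for `k = 0` it has zero magnetic charge. -/
theorem embedded_RNadS_solution
    (L : ℕ) (hL : 1 ≤ L)
    (C : Matrix (Fin L) (Fin L) ℝ) (hC : IsUnit C.det)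
    (alpha2 : Fin L → ℝ) (halpha : ∀ j, 0 < alpha2 j)
    (hposdef : (Matrix.of fun i j => 2 * C i j / alpha2 j).PosDef)
    (w : Fin L → ℝ) (hw : ∀ j, 0 < w j)
    (k : ℝ) (hk : k = -1 ∨ k = 0 ∨ k = 1)
    (ℓ : ℝ) (hℓ : 0 < ℓ)
    (M Q2 : ℝ)
    (hQ2 : Q2 = (k ^ 2 / 4) * ∑ i, ∑ j, w i * (2 * C i j / alpha2 j) * w j)
    (m S : ℝ → ℝ) (ω E : Fin L → ℝ → ℝ)
    (hm : m = fun r => M - Q2 / (2 * r)) (hS : S = fun _ => 1)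
    (hω : ω = fun _ _ => 0) (hE : E = fun _ _ => 0) :
    (∀ r : ℝ, 0 < r → 0 < muF k ℓ m r → FieldEqnsAt C alpha2 w k ℓ m S ω E r) ∧
    (∀ r : ℝ, 0 < r → muF k ℓ m r = k - 2 * M / r + Q2 / r ^ 2 + r ^ 2 / ℓ ^ 2) ∧
    0 ≤ Q2 ∧
    (k = 0 → Q2 = 0) ∧
    (∀ c : ℝ, ∀ r : ℝ, 0 < r → 0 < muF k ℓ (fun r => M - c / (2 * r)) r →
      FieldEqnsAt C alpha2 w k ℓ (fun r => M - c / (2 * r)) S ω E r → c = Q2) := by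
  subst hm hS hω hE
  have hPF : ∀ r : ℝ, PF C alpha2 w k (fun _ _ => 0) r = Q2 / 2 := by
    intro r
    have h1 : ∀ i j : Fin L,
        (k * w i - ((fun _ _ => (0:ℝ)) i r) ^ 2) * (2 * C i j / alpha2 j)
          * (k * w j - ((fun _ _ => (0:ℝ)) j r) ^ 2)
        = k ^ 2 * (w i * (2 * C i j / alpha2 j) * w j) := by
      intro i j; simp; ring
    simp only [PF, h1, ← Finset.mul_sum, hQ2]
    ring
  have hQ2nn : 0 ≤ Q2 := by
    have hwne : w ≠ 0 := by
      intro h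
      have := hw ⟨0, hL⟩
      rw [h] at this; simp at this
    have hpos := (Matrix.posDef_iff_dotProduct_mulVec.mp hposdef).2 hwne
    have heq : dotProduct (star w) (Matrix.mulVec (Matrix.of fun i j => 2 * C i j / alpha2 j) w)
        = ∑ i, ∑ j, w i * (2 * C i j / alpha2 j) * w j := by
      simp [dotProduct, Matrix.mulVec, Finset.mul_sum, mul_assoc]
    rw [hQ2]
    have : (0:ℝ) < ∑ i, ∑ j, w i * (2 * C i j / alpha2 j) * w j := by
      rw [← heq]; simpa using hpos
    positivity
  refine ⟨?_, ?_, hQ2nn, ?_, ?_⟩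
  · intro r hr hμ
    have hrne : r ≠ 0 := ne_of_gt hr
    refine ⟨?_, ?_, ?_, ?_⟩
    · simp [etaF, zetaF, GF, deriv_m_aux M Q2 r hrne, hPF r]
      ring
    · simp [etaF, zetaF, GF]
    · intro i; simp [ZF, etaF, zetaF, GF]
    · intro i; simp [FF, etaF, zetaF, GF]
  · intro r hr
    have hrne : r ≠ 0 := ne_of_gt hr
    simp only [muF]
    field_simp
    ring
  · intro hk0
    rw [hQ2, hk0]
    simp
  · intro c r hr hμ heq
    obtain ⟨h1, -, -, -⟩ := heq
    rw [deriv_m_aux M c r (ne_of_gt hr)] at h1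
    simp [etaF, zetaF, GF, hPF r] at h1
    have hr2 : r ^ 2 ≠ 0 := pow_ne_zero _ (ne_of_gt hr)
    field_simp at h1
    linarith
end
end

section
/- Let L ≥ 1 and let C be the L×L Cartan matrix of type A_L, i.e. C_{ii} = 2, C_{i,i+1} = C_{i+1,i} = −1, and C_{ij} = 0 for |i − j| ≥ 2. Then: (a) the constants w_j := 2 Σ_{k=1}^L (C⁻¹)_{jk} satisfy w_j = j(L + 1 − j) for j = 1,…,L; and (b) the symmetric matrix T with entries T_{ij} = √(w_i) C_{ij} √(w_j) has characteristic polynomial ∏_{j=1}^L (x − j(j+1)); in particular, the spectrum of T is exactly {j(j+1) : j = 1,…,L}. -/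
noncomputable section

open Polynomial Finset Matrix

namespace CartanAL


/-- falling factorial t(t-1)...(t-r+1) -/
def ff : ℕ → ℝ → ℝ
  | 0, _ => 1
  | r+1, t => ff r t * (t - r)

lemma ff_succ (r : ℕ) (t : ℝ) : ff (r+1) t = ff r t * (t - r) := rfl

lemma ff_delta : ∀ (r : ℕ) (t : ℝ), ff r (t+1) = ff r t + r * ff (r-1) t := by
  intro r
  induction r with
  | zero => intro t; simp [ff]
  | succ r ih =>
    intro t
    cases r with
    | zero => simp [ff]
    | succ m =>
      have h := ih t
      simp only [Nat.add_sub_cancel] at h ⊢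
      have e3 : ff (m+2) (t+1) = ff (m+1) (t+1) * (t + 1 - ((m:ℝ)+1)) := by
        rw [ff_succ]; push_cast; ring_nf
      have e2 : ff (m+2) t = ff (m+1) t * (t - ((m:ℝ)+1)) := by
        rw [ff_succ]; push_cast; ring
      have e1 : ff (m+1) t = ff m t * (t - (m:ℝ)) := rfl
      rw [e3, h, e2, e1]
      push_cast
      ring

lemma ff_shift : ∀ (k : ℕ) (t : ℝ), t * ff k (t-1) = ff (k+1) t := by
  intro k
  induction k with
  | zero => intro t; simp [ff]
  | succ k ih =>
    intro t
    rw [ff_succ, ff_succ, ← ih]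
    push_cast
    ring

lemma ff_zero (r : ℕ) (hr : 1 ≤ r) : ff r 0 = 0 := by
  cases r with
  | zero => omega
  | succ m =>
    rw [← ff_shift]
    ring

/-- key second-difference identity -/
lemma ff_key (Lr : ℝ) : ∀ (r : ℕ) (t : ℝ),
    t * (Lr + 1 - t) * (2 * ff r t - ff r (t-1) - ff r (t+1))
      = (r:ℝ) * ((r:ℝ)-1) * ff r t - (r:ℝ) * ((r:ℝ)-1) * (Lr + 2 - r) * ff (r-1) t := by
  intro r t
  match r with
  | 0 => simp only [ff]; push_cast; ring
  | 1 => simp only [ff]; push_cast; ring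
  | (m+2) =>
    have h1 : ff (m+2) (t+1) = ff (m+2) t + ((m:ℝ)+2) * ff (m+1) t := by
      have := ff_delta (m+2) t; simpa using this
    have h2 : ff (m+2) t = ff (m+2) (t-1) + ((m:ℝ)+2) * ff (m+1) (t-1) := by
      have := ff_delta (m+2) (t-1); rw [sub_add_cancel] at this; simpa using this
    have h3 : ff (m+1) t = ff (m+1) (t-1) + ((m:ℝ)+1) * ff m (t-1) := by
      have := ff_delta (m+1) (t-1); rw [sub_add_cancel] at this; simpa using this
    have h4 : t * ff m (t-1) = ff (m+1) t := ff_shift m t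
    have h5 : ff (m+2) t = ff (m+1) t * (t - ((m:ℝ)+1)) := by rw [ff_succ]; push_cast; ring
    have hd : 2 * ff (m+2) t - ff (m+2) (t-1) - ff (m+2) (t+1)
        = -((m:ℝ)+2) * (((m:ℝ)+1) * ff m (t-1)) := by
      rw [h1]
      have : ff (m+2) (t-1) = ff (m+2) t - ((m:ℝ)+2) * ff (m+1) (t-1) := by linarith [h2]
      rw [this]
      have : ff (m+1) (t-1) = ff (m+1) t - ((m:ℝ)+1) * ff m (t-1) := by linarith [h3]
      rw [this]
      ring
    rw [hd]
    push_cast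
    linear_combination (-(((m:ℝ)+2)*((m:ℝ)+1)*(Lr+1-t))) * h4 - (((m:ℝ)+2)*((m:ℝ)+1)) * h5


lemma ff_zero'(t : ℝ) : ff 0 t = 1 := rfl
def ffP : ℕ → ℝ[X] := fun r => ∏ s ∈ Finset.range r, (X - Polynomial.C (s:ℝ))

lemma ffP_monic (r : ℕ) : (ffP r).Monic :=
  monic_prod_of_monic _ _ fun s _ => monic_X_sub_C _

lemma ffP_natDegree (r : ℕ) : (ffP r).natDegree = r := by
  rw [ffP, natDegree_prod_of_monic _ _ fun s _ => monic_X_sub_C _]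
  simp only [Polynomial.natDegree_X_sub_C, Finset.sum_const, Finset.card_range, smul_eq_mul, mul_one]

lemma ffP_eval (r : ℕ) (t : ℝ) : (ffP r).eval t = ff r t := by
  induction r with
  | zero => simp [ffP, ff_zero']
  | succ r ih =>
    rw [ffP, Finset.prod_range_succ, ← ffP, eval_mul, ih, ff_succ]
    simp

lemma eigenpoly (Lr : ℝ) (k : ℕ) :
    ∃ p : ℝ → ℝ,
      (∀ t : ℝ, t * (Lr + 1 - t) * (2 * p t - p (t-1) - p (t+1))
          = (((k:ℝ)+1)*((k:ℝ)+2)) * p t) ∧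
      p 0 = 0 ∧
      ∃ P : ℝ[X], (∀ t, P.eval t = p t) ∧ P.natDegree ≤ k + 2 ∧ P.coeff (k+2) = 1 := by
  classical
  set n : ℕ := k + 2 with hn
  set c : ℕ → ℝ := fun s =>
    (-(((s:ℝ)+1) * s * (Lr + 1 - s))) / ((((k:ℝ)+2) - s) * (((k:ℝ)+2) + s - 1)) with hc
  set a : ℕ → ℝ := fun r => ∏ s ∈ Finset.Ico r n, c s with ha
  set p : ℝ → ℝ := fun t => ∑ q ∈ Finset.range n, a (q+1) * ff (q+1) t with hp
  have han : a n = 1 := by simp [ha]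
  have harec : ∀ q, q < k + 1 → a (q+1) = c (q+1) * a (q+2) := by
    intro q hq
    show (∏ s ∈ Finset.Ico (q+1) n, c s) = c (q+1) * ∏ s ∈ Finset.Ico (q+2) n, c s
    exact Finset.prod_eq_prod_Ico_succ_bot (by omega : q+1 < n) c
  have hcoef : ∀ q, q < k + 1 →
      a (q+1) * (((q:ℝ)+1)*(q:ℝ) - (((k:ℝ)+1)*((k:ℝ)+2)))
        = a (q+2) * (((q:ℝ)+2)*((q:ℝ)+1)*(Lr - (q:ℝ))) := by
    intro q hq
    rw [harec q hq, hc]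
    have h1 : ((k:ℝ)+2) - ((q:ℝ)+1) ≠ 0 := by
      have : (q:ℝ) < (k:ℝ) + 1 := by exact_mod_cast hq
      intro h; nlinarith
    have h2 : ((k:ℝ)+2) + ((q:ℝ)+1) - 1 ≠ 0 := by
      have : (0:ℝ) < (k:ℝ)+(q:ℝ)+2 := by positivity
      intro h; linarith
    push_cast
    field_simp
    ring
  refine ⟨p, ?_, ?_, ?_⟩
  · intro t
    have key : ∀ q : ℕ, t * (Lr + 1 - t) * (2 * ff (q+1) t - ff (q+1) (t-1) - ff (q+1) (t+1))
        = (((q:ℝ)+1)*(q:ℝ)) * ff (q+1) t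
            - (((q:ℝ)+1)*(q:ℝ)*(Lr + 1 - (q:ℝ))) * ff q t := by
      intro q
      have h := ff_key Lr (q+1) t
      simp only [Nat.add_sub_cancel] at h
      push_cast at h
      rw [h]; ring
    have e : 2 * p t - p (t-1) - p (t+1) = ∑ q ∈ Finset.range n,
        a (q+1) * (2 * ff (q+1) t - ff (q+1) (t-1) - ff (q+1) (t+1)) := by
      rw [hp]; simp only
      rw [Finset.mul_sum, ← Finset.sum_sub_distrib, ← Finset.sum_sub_distrib]
      exact Finset.sum_congr rfl fun q _ => by ring
    have step1 : t * (Lr + 1 - t) * (2 * p t - p (t-1) - p (t+1))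
        = (∑ q ∈ Finset.range n, a (q+1) * ((((q:ℝ)+1)*(q:ℝ)) * ff (q+1) t))
          - ∑ q ∈ Finset.range n, a (q+1) * ((((q:ℝ)+1)*(q:ℝ)*(Lr + 1 - (q:ℝ))) * ff q t) := by
      rw [e, Finset.mul_sum, ← Finset.sum_sub_distrib]
      refine Finset.sum_congr rfl fun q _ => ?_
      have hk := key q
      calc t * (Lr + 1 - t) * (a (q + 1) * (2 * ff (q+1) t - ff (q+1) (t-1) - ff (q+1) (t+1)))
          = a (q+1) * (t * (Lr + 1 - t) * (2 * ff (q+1) t - ff (q+1) (t-1) - ff (q+1) (t+1))) := by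
            ring
        _ = _ := by rw [hk]; ring
    have hB : (∑ q ∈ Finset.range n, a (q+1) * ((((q:ℝ)+1)*(q:ℝ)*(Lr + 1 - (q:ℝ))) * ff q t))
        = ∑ q ∈ Finset.range (k+1), a (q+2) * ((((q:ℝ)+2)*((q:ℝ)+1)*(Lr - (q:ℝ))) * ff (q+1) t) := by
      have hnn : n = (k+1) + 1 := by omega
      rw [hnn, Finset.sum_range_succ']
      norm_num
      exact Finset.sum_congr rfl fun q _ => by push_cast; ring
    have hAP : (∑ q ∈ Finset.range n, a (q+1) * ((((q:ℝ)+1)*(q:ℝ)) * ff (q+1) t))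
          - (((k:ℝ)+1)*((k:ℝ)+2)) * p t
        = ∑ q ∈ Finset.range (k+1), a (q+2) * ((((q:ℝ)+2)*((q:ℝ)+1)*(Lr - (q:ℝ))) * ff (q+1) t) := by
      rw [hp]; simp only
      rw [Finset.mul_sum, ← Finset.sum_sub_distrib]
      have hnn : n = (k+1) + 1 := by omega
      rw [hnn, Finset.sum_range_succ]
      have hz : a (k+1+1) * (((((k+1:ℕ)):ℝ)+1)*(((k+1:ℕ)):ℝ) * ff ((k+1)+1) t)
          - (((k:ℝ)+1)*((k:ℝ)+2)) * (a ((k+1)+1) * ff ((k+1)+1) t) = 0 := by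
        push_cast; ring
      rw [hz, add_zero]
      refine Finset.sum_congr rfl fun q hq => ?_
      have hq' := Finset.mem_range.mp hq
      have hco := hcoef q hq'
      linear_combination (ff (q+1) t) * hco
    rw [step1]
    linarith [hAP, hB]
  · simp [hp, ff_zero]
  · refine ⟨∑ q ∈ Finset.range n, Polynomial.C (a (q+1)) * ffP (q+1), ?_, ?_, ?_⟩
    · intro t
      rw [eval_finset_sum, hp]
      exact Finset.sum_congr rfl fun q _ => by rw [eval_mul, eval_C, ffP_eval]
    · refine Polynomial.natDegree_sum_le_of_forall_le _ _ fun q hq => ?_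
      refine le_trans (natDegree_C_mul_le _ _) ?_
      rw [ffP_natDegree]
      simp at hq; omega
    · rw [finset_sum_coeff]
      rw [hn, Finset.sum_range_succ]
      have hlast : (Polynomial.C (a (k+2)) * ffP (k+2)).coeff (k+2) = 1 := by
        have hco : (ffP (k+2)).coeff (k+2) = 1 := by
          have h := (ffP_monic (k+2)).coeff_natDegree
          rwa [ffP_natDegree] at h
        rw [coeff_C_mul, hco, han, mul_one]
      rw [hlast]
      have : ∀ q ∈ Finset.range (k+1), (Polynomial.C (a (q+1)) * ffP (q+1)).coeff (k+2) = 0 := by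
        intro q hq
        simp at hq
        rw [coeff_C_mul, Polynomial.coeff_eq_zero_of_natDegree_lt, mul_zero]
        rw [ffP_natDegree]; omega
      rw [Finset.sum_eq_zero this, zero_add]



/-- extension of a `Fin L` vector to `ℕ`, 1-indexed, zero outside `[1, L]` -/
def ext (L : ℕ) (x : Fin L → ℝ) : ℕ → ℝ :=
  fun m => if h : 1 ≤ m ∧ m ≤ L then x ⟨m-1, by omega⟩ else 0

lemma ext_val (L : ℕ) (x : Fin L → ℝ) (j : Fin L) : ext L x (j.val + 1) = x j := by
  rw [ext, dif_pos ⟨by omega, by omega⟩]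
  congr 1

lemma tri_mulVec (L : ℕ) (C : Matrix (Fin L) (Fin L) ℝ)
    (hC : ∀ i j : Fin L, C i j =
      if i = j then 2 else if i.val + 1 = j.val ∨ j.val + 1 = i.val then -1 else 0)
    (x : Fin L → ℝ) (i : Fin L) :
    (C *ᵥ x) i = 2 * ext L x (i.val+1) - ext L x i.val - ext L x (i.val+2) := by
  have hterm : ∀ j : Fin L, C i j * x j =
      2 * (if i = j then x j else 0) - (if j.val + 1 = i.val then x j else 0)
        - (if i.val + 1 = j.val then x j else 0) := by
    intro j
    rw [hC]
    rcases eq_or_ne i j with h | h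
    · rw [if_pos h, if_pos h, if_neg (by omega : ¬ (j.val + 1 = i.val)),
        if_neg (by omega : ¬ (i.val + 1 = j.val))]
      ring
    · rw [if_neg h]
      have hne : i.val ≠ j.val := fun hc => h (Fin.ext hc)
      rw [if_neg h]
      by_cases h1 : i.val + 1 = j.val
      · rw [if_pos (Or.inl h1), if_pos h1, if_neg (by omega)]; ring
      · by_cases h2 : j.val + 1 = i.val
        · rw [if_pos (Or.inr h2), if_pos h2, if_neg h1]; ring
        · rw [if_neg (by tauto), if_neg h1, if_neg h2]; ring
  have hsum : (C *ᵥ x) i = ∑ j : Fin L, C i j * x j := rfl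
  rw [hsum, Finset.sum_congr rfl fun j _ => hterm j]
  rw [Finset.sum_sub_distrib, Finset.sum_sub_distrib, ← Finset.mul_sum]
  have e1 : ∑ j : Fin L, (if i = j then x j else 0) = ext L x (i.val + 1) := by
    rw [Finset.sum_ite_eq, if_pos (Finset.mem_univ i), ext_val]
  have e2 : ∑ j : Fin L, (if j.val + 1 = i.val then x j else 0) = ext L x i.val := by
    by_cases h0 : 1 ≤ i.val
    · have hlt : i.val - 1 < L := by omega
      rw [Finset.sum_eq_single_of_mem ⟨i.val - 1, hlt⟩ (Finset.mem_univ _)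
        (fun b _ hb => if_neg (fun hc => hb (Fin.ext (by simp at hc ⊢; omega))))]
      rw [if_pos (by simp; omega), ext, dif_pos ⟨h0, by omega⟩]
    · have : i.val = 0 := by omega
      rw [Finset.sum_eq_zero (fun j _ => if_neg (by omega)), ext, dif_neg (by omega)]
  have e3 : ∑ j : Fin L, (if i.val + 1 = j.val then x j else 0) = ext L x (i.val + 2) := by
    by_cases h0 : i.val + 1 < L
    · rw [Finset.sum_eq_single_of_mem ⟨i.val + 1, h0⟩ (Finset.mem_univ _)
        (fun b _ hb => if_neg (fun hc => hb (Fin.ext (by simp at hc ⊢; omega))))]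
      rw [if_pos (by simp), ext, dif_pos ⟨by omega, by omega⟩]
      congr 1
    · rw [Finset.sum_eq_zero (fun j _ => if_neg (by omega)), ext, dif_neg (by omega)]
  rw [e1, e2, e3]


end CartanAL

/-- for the Cartan matrix `C` of type `A_L`, the constants
`w_j = 2 Σ_k (C⁻¹)_{jk}` equal `j(L+1−j)` (here `j = j₀+1` for the 0-indexed `j₀ : Fin L`),
and the matrix `T` with `T_{ij} = √(w_i) C_{ij} √(w_j)` has characteristic polynomial
`∏_{j=1}^L (x − j(j+1))`; in particular its spectrum is `{j(j+1) : j = 1,…,L}`. -/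
theorem cartan_AL_spectrum
    (L : ℕ) (hL : 1 ≤ L)
    (C : Matrix (Fin L) (Fin L) ℝ)
    (hC : ∀ i j : Fin L, C i j =
      if i = j then 2 else if i.val + 1 = j.val ∨ j.val + 1 = i.val then -1 else 0)
    (w : Fin L → ℝ) (hw : ∀ j, w j = 2 * ∑ k, C⁻¹ j k)
    (T : Matrix (Fin L) (Fin L) ℝ)
    (hT : ∀ i j, T i j = Real.sqrt (w i) * C i j * Real.sqrt (w j)) :
    (∀ j : Fin L, w j = ((j : ℕ) + 1) * (L - (j : ℕ))) ∧
    T.charpoly = ∏ j : Fin L, (X - Polynomial.C ((((j : ℕ) + 1) * ((j : ℕ) + 2) : ℕ) : ℝ)) ∧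
    spectrum ℝ T = {x : ℝ | ∃ j : Fin L, x = ((j : ℕ) + 1) * ((j : ℕ) + 2)} := by
  classical
  -- ## Part (a)
  have hdet : C.det ≠ 0 := by
    intro hdet0
    obtain ⟨x, hx0, hx⟩ := (Matrix.exists_mulVec_eq_zero_iff).mpr hdet0
    have hX0 : CartanAL.ext L x 0 = 0 := by rw [CartanAL.ext]; simp
    have hXL1 : CartanAL.ext L x (L+1) = 0 := by rw [CartanAL.ext]; rw [dif_neg (by omega)]
    have hrec : ∀ i : Fin L, 2 * CartanAL.ext L x (i.val+1) - CartanAL.ext L x i.val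
        - CartanAL.ext L x (i.val+2) = 0 := by
      intro i
      rw [← CartanAL.tri_mulVec L C hC x i, hx]
      rfl
    have hlin : ∀ m, m ≤ L + 1 → CartanAL.ext L x m = m * CartanAL.ext L x 1 := by
      intro m
      induction m using Nat.strong_induction_on with
      | _ m ih =>
        intro hm
        match m, hm with
        | 0, _ => simpa using hX0
        | 1, _ => simp
        | (i+2), hm =>
          have hiL : i < L := by omega
          have h := hrec ⟨i, hiL⟩
          simp only at h
          have h1 := ih (i+1) (by omega) (by omega)
          have h2 := ih i (by omega) (by omega)
          rw [h1, h2] at h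
          push_cast at h ⊢
          linarith
    have hx1 : CartanAL.ext L x 1 = 0 := by
      have h := hlin (L+1) le_rfl
      rw [hXL1] at h
      have hLpos : (0:ℝ) < ((L:ℝ)+1) := by positivity
      push_cast at h
      nlinarith
    apply hx0
    funext j
    have h := hlin (j.val+1) (by omega)
    rw [CartanAL.ext_val, hx1, mul_zero] at h
    exact h
  set v : Fin L → ℝ := fun j => ((j.val:ℝ)+1) * ((L:ℝ) - (j.val:ℝ)) with hv
  have hev : ∀ m : ℕ, m ≤ L + 1 → CartanAL.ext L v m = (m:ℝ) * ((L:ℝ) + 1 - (m:ℝ)) := by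
    intro m hm
    rw [CartanAL.ext]
    by_cases h : 1 ≤ m ∧ m ≤ L
    · rw [dif_pos h]
      simp only [hv]
      have hc : ((m-1:ℕ):ℝ) = (m:ℝ) - 1 := by
        rw [Nat.cast_sub h.1]; norm_num
      rw [hc]
      ring
    · rw [dif_neg h]
      have : m = 0 ∨ m = L + 1 := by omega
      rcases this with h0 | h1
      · subst h0; simp
      · subst h1; push_cast; ring
  have hCv : C *ᵥ v = fun _ => 2 := by
    funext i
    rw [CartanAL.tri_mulVec L C hC v i,
        hev (i.val+1) (by omega), hev i.val (by omega), hev (i.val+2) (by omega)]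
    push_cast
    ring
  have hwv : ∀ j, w j = v j := by
    have hCu : IsUnit C.det := isUnit_iff_ne_zero.mpr hdet
    have hinv : C⁻¹ * C = 1 := Matrix.nonsing_inv_mul C hCu
    have hvv : C⁻¹ *ᵥ (C *ᵥ v) = v := by
      rw [Matrix.mulVec_mulVec, hinv, Matrix.one_mulVec]
    intro j
    rw [hw]
    have h2 : (C⁻¹ *ᵥ (fun _ => 2)) j = v j := by rw [← hCv, hvv]
    rw [← h2]
    rw [Matrix.mulVec, dotProduct]
    rw [Finset.mul_sum]
    exact Finset.sum_congr rfl fun k _ => by ring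
  have parta : ∀ j : Fin L, w j = ((j : ℕ) + 1) * ((L:ℝ) - (j : ℕ)) := fun j => hwv j
  have hwpos : ∀ j : Fin L, 0 < w j := by
    intro j
    rw [hwv]
    simp only [hv]
    have hjL : (j.val:ℝ) < (L:ℝ) := by exact_mod_cast j.isLt
    have h1 : (0:ℝ) < (j.val:ℝ)+1 := by positivity
    nlinarith
  -- ## eval of charpoly
  have hevalchar : ∀ μ : ℝ, T.charpoly.eval μ
      = Matrix.det (μ • (1 : Matrix (Fin L) (Fin L) ℝ) - T) := by
    intro μ
    rw [Matrix.charpoly, ← Polynomial.coe_evalRingHom, RingHom.map_det]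
    congr 1
    ext i j
    by_cases h : i = j
    · subst h
      simp [Matrix.charmatrix_apply_eq, Matrix.one_apply_eq]
    · simp [Matrix.charmatrix_apply_ne _ _ _ h, Matrix.one_apply_ne h]
  -- ## eigenvalues
  have heig : ∀ k : Fin L,
      Matrix.det (((((k.val:ℝ))+1) * (((k.val:ℝ))+2)) • (1 : Matrix (Fin L) (Fin L) ℝ) - T) = 0 := by
    intro k
    obtain ⟨p, hmain, hp0, P, hPeval, hPdeg, hPcoeff⟩ := CartanAL.eigenpoly (L:ℝ) k.val
    set lam : ℝ := ((k.val:ℝ)+1) * ((k.val:ℝ)+2) with hlam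
    have hlampos : (0:ℝ) < lam := by positivity
    have hpL1 : p ((L:ℝ)+1) = 0 := by
      have h := hmain ((L:ℝ)+1)
      have hz : ((L:ℝ)+1) * ((L:ℝ) + 1 - ((L:ℝ)+1)) = 0 := by ring
      rw [show ((L:ℝ)+1) * ((L:ℝ) + 1 - ((L:ℝ)+1)) * (2 * p ((L:ℝ)+1) - p ((L:ℝ)+1-1) - p ((L:ℝ)+1+1)) = 0 from by rw [hz]; ring] at h
      have := h.symm
      rcases mul_eq_zero.mp this with h' | h'
      · exact absurd h' (ne_of_gt hlampos)
      · exact h'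
    set u : Fin L → ℝ := fun j => p ((j.val:ℝ)+1) / Real.sqrt (w j) with hu
    set y : Fin L → ℝ := fun j => p ((j.val:ℝ)+1) with hy
    have hexty : ∀ m : ℕ, m ≤ L + 1 → CartanAL.ext L y m = p (m:ℝ) := by
      intro m hm
      rw [CartanAL.ext]
      by_cases h : 1 ≤ m ∧ m ≤ L
      · rw [dif_pos h]
        simp only [hy]
        congr 1
        rw [Nat.cast_sub h.1]
        norm_num
      · rw [dif_neg h]
        have : m = 0 ∨ m = L + 1 := by omega
        rcases this with h0 | h1
        · subst h0; rw [Nat.cast_zero, hp0]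
        · subst h1; rw [show (((L+1:ℕ)):ℝ) = (L:ℝ)+1 by push_cast; ring, hpL1]
    have hTu : ∀ i, (T *ᵥ u) i = lam * u i := by
      intro i
      have hsq : Real.sqrt (w i) * Real.sqrt (w i) = w i := Real.mul_self_sqrt (hwpos i).le
      have hspos : ∀ j : Fin L, (0:ℝ) < Real.sqrt (w j) := fun j => Real.sqrt_pos.mpr (hwpos j)
      have hstep : ∀ j : Fin L, T i j * u j = Real.sqrt (w i) * (C i j * y j) := by
        intro j
        have hdc : Real.sqrt (w j) * (p ((j.val:ℝ)+1) / Real.sqrt (w j)) = p ((j.val:ℝ)+1) := by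
          rw [mul_div_assoc']
          exact mul_div_cancel_left₀ _ (hspos j).ne'
        calc T i j * u j
            = (Real.sqrt (w i) * C i j) * (Real.sqrt (w j) * (p ((j.val:ℝ)+1) / Real.sqrt (w j))) := by
              rw [hT]; simp only [hu]; ring
          _ = Real.sqrt (w i) * (C i j * y j) := by rw [hdc]; simp only [hy]; ring
      have hsum : (T *ᵥ u) i = Real.sqrt (w i) * ((C *ᵥ y) i) := by
        show (∑ j, T i j * u j) = _
        rw [Finset.sum_congr rfl fun j _ => hstep j, ← Finset.mul_sum]
        rfl
      rw [hsum, CartanAL.tri_mulVec L C hC y i,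
          hexty (i.val+1) (by omega), hexty i.val (by omega), hexty (i.val+2) (by omega)]
      have hm := hmain ((i.val:ℝ)+1)
      rw [show ((i.val:ℝ)+1) - 1 = (i.val:ℝ) by ring,
          show ((i.val:ℝ)+1) + 1 = ((i.val:ℝ)+2) by ring] at hm
      have hwi : ((i.val:ℝ)+1) * ((L:ℝ) + 1 - ((i.val:ℝ)+1)) = w i := by
        rw [hwv]; simp only [hv]; ring
      rw [hwi] at hm
      -- hm : w i * (2 * p (i+1) - p i - p (i+2)) = lam * p (i+1)
      push_cast
      simp only [hu]
      have hne := (hspos i).ne'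
      rw [mul_div_assoc' lam, eq_div_iff hne]
      linear_combination hm + (2 * p ((i.val:ℝ)+1) - p (i.val:ℝ) - p ((i.val:ℝ)+2)) * hsq
    have hune : u ≠ 0 := by
      intro h0
      have hpz : ∀ j : Fin L, p ((j.val:ℝ)+1) = 0 := by
        intro j
        have hj := congrFun h0 j
        simp only [hu, Pi.zero_apply] at hj
        have hspos : (0:ℝ) < Real.sqrt (w j) := Real.sqrt_pos.mpr (hwpos j)
        rcases div_eq_zero_iff.mp hj with h' | h'
        · exact h'
        · exact absurd h' hspos.ne'
      have hPz : P = 0 := by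
        apply Polynomial.eq_zero_of_natDegree_lt_card_of_eval_eq_zero P
          (f := fun i : Fin (L+2) => ((i.val:ℕ):ℝ))
        · intro s t hst
          have hst2 : ((s.val:ℕ):ℝ) = ((t.val:ℕ):ℝ) := hst
          exact Fin.ext (by exact_mod_cast hst2)
        · intro m
          rw [hPeval]
          rcases Nat.lt_or_ge m.val 1 with h1 | h1
          · have : m.val = 0 := by omega
            rw [this, Nat.cast_zero, hp0]
          · rcases Nat.lt_or_ge m.val (L+1) with h2 | h2
            · have hmL : m.val - 1 < L := by omega
              have := hpz ⟨m.val - 1, hmL⟩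
              simp only at this
              rw [show (((m.val - 1:ℕ)):ℝ) + 1 = ((m.val:ℕ):ℝ) from by
                rw [Nat.cast_sub h1]; ring] at this
              exact this
            · have : m.val = L + 1 := by omega
              rw [this, show (((L+1:ℕ)):ℝ) = (L:ℝ)+1 by push_cast; ring, hpL1]
        · rw [Fintype.card_fin]
          have := k.isLt
          omega
      rw [hPz] at hPcoeff
      simp at hPcoeff
    rw [← Matrix.exists_mulVec_eq_zero_iff]
    refine ⟨u, hune, ?_⟩
    funext i
    rw [Matrix.sub_mulVec]
    simp only [Pi.sub_apply, Matrix.smul_mulVec, Matrix.one_mulVec, Pi.smul_apply,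
      smul_eq_mul, Pi.zero_apply]
    rw [hTu i]
    ring
  -- ## charpoly
  set lamf : Fin L → ℝ := fun j => ((((j.val:ℕ) + 1) * ((j.val:ℕ) + 2) : ℕ) : ℝ) with hlamf
  have hlaminj : Function.Injective lamf := by
    intro s t hst
    have hst' : ((((s.val + 1) * (s.val + 2) : ℕ)):ℝ) = ((((t.val + 1) * (t.val + 2) : ℕ)):ℝ) := hst
    have h : (s.val + 1) * (s.val + 2) = (t.val + 1) * (t.val + 2) := by exact_mod_cast hst'
    have : s.val = t.val := by nlinarith [h]
    exact Fin.ext this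
  have hqmonic : (∏ j : Fin L, (X - Polynomial.C (lamf j))).Monic :=
    monic_prod_of_monic _ _ fun j _ => monic_X_sub_C _
  have hqdeg : (∏ j : Fin L, (X - Polynomial.C (lamf j))).natDegree = L := by
    rw [natDegree_prod_of_monic _ _ fun j _ => monic_X_sub_C _]
    simp only [Polynomial.natDegree_X_sub_C, Finset.sum_const, Finset.card_univ,
      Fintype.card_fin, smul_eq_mul, mul_one]
  have hdvd : (∏ j : Fin L, (X - Polynomial.C (lamf j))) ∣ T.charpoly := by
    apply Finset.prod_dvd_of_coprime
    · exact (Polynomial.pairwise_coprime_X_sub_C hlaminj).set_pairwise _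
    · intro i _
      rw [Polynomial.dvd_iff_isRoot, Polynomial.IsRoot, hevalchar]
      have h := heig i
      rw [show lamf i = ((i.val:ℝ)+1) * ((i.val:ℝ)+2) from by simp only [hlamf]; push_cast; ring]
      exact h
  have hcmonic := Matrix.charpoly_monic T
  have hcdeg : T.charpoly.natDegree = L := by
    rw [Matrix.charpoly_natDegree_eq_dim, Fintype.card_fin]
  have hchar : T.charpoly = ∏ j : Fin L, (X - Polynomial.C (lamf j)) := by
    obtain ⟨r, hr⟩ := hdvd
    have hq0 : (∏ j : Fin L, (X - Polynomial.C (lamf j))) ≠ 0 := hqmonic.ne_zero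
    have hr0 : r ≠ 0 := by
      intro h
      rw [h, mul_zero] at hr
      exact hcmonic.ne_zero hr
    have hdeg0 : r.natDegree = 0 := by
      have hh := congrArg Polynomial.natDegree hr
      rw [hcdeg, Polynomial.natDegree_mul hq0 hr0, hqdeg] at hh
      omega
    have hrlc : r.leadingCoeff = 1 := by
      have hh := congrArg Polynomial.leadingCoeff hr
      rw [Polynomial.leadingCoeff_mul, hqmonic.leadingCoeff, one_mul,
        hcmonic.leadingCoeff] at hh
      exact hh.symm
    have hr1 : r = 1 := by
      have hc0 : r.coeff 0 = 1 := by
        rw [← hrlc, Polynomial.leadingCoeff, hdeg0]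
      rw [Polynomial.eq_C_of_natDegree_eq_zero hdeg0, hc0, Polynomial.C_1]
    rw [hr, hr1, mul_one]
  refine ⟨parta, hchar, ?_⟩
  -- ## spectrum
  ext μ
  simp only [Set.mem_setOf_eq]
  have hmem : μ ∈ spectrum ℝ T ↔ T.charpoly.eval μ = 0 := by
    rw [spectrum.mem_iff, Matrix.isUnit_iff_isUnit_det, isUnit_iff_ne_zero, not_ne_iff,
      hevalchar, Algebra.algebraMap_eq_smul_one]
  rw [hmem, hchar, Polynomial.eval_prod]
  rw [Finset.prod_eq_zero_iff]
  constructor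
  · rintro ⟨j, -, hj⟩
    rw [Polynomial.eval_sub, Polynomial.eval_X, Polynomial.eval_C, sub_eq_zero] at hj
    exact ⟨j, by rw [hj]; simp only [hlamf]; push_cast; ring⟩
  · rintro ⟨j, hj⟩
    refine ⟨j, Finset.mem_univ j, ?_⟩
    rw [Polynomial.eval_sub, Polynomial.eval_X, Polynomial.eval_C, sub_eq_zero, hj]
    simp only [hlamf]; push_cast; ring
end
end
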